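/- arXiv:2509.14083 — 5 statements merged into one kernel-verified Lean document; each statement's English description precedes it below -/
import Mathlib

section
/- Let G be a finite group, H ≤ G, I ◁ D ≤ G, and C = ⟨c⟩ ≤ D cyclic with D = C·I. For g ∈ G, the orbit of the double coset IgH under the left C-action on I\G/H has cardinality |C^g| / |C^g ∩ (I^g · (D^g ∩ H))|, where X^g denotes g⁻¹Xg. -/
open DoubleCoset Pointwise

/-- For a subset `X` of a group and `g` an element, `X^g = g⁻¹Xg`. -/
def setConj {G : Type*} [Group G] (X : Set G) (g : G) : Set G :=
  (fun x => g⁻¹ * x * g) '' X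

theorem setConj_subgroup_eq {G : Type*} [Group G] (K : Subgroup G) (g : G) :
    setConj (K : Set G) g = ↑(K.comap ((MulAut.conj g).toMonoidHom)) := by
  ext x
  simp only [setConj, Set.mem_image, SetLike.mem_coe, Subgroup.mem_comap,
    MulEquiv.coe_toMonoidHom, MulAut.conj_apply]
  constructor
  · rintro ⟨k, hk, rfl⟩
    convert hk using 1
    group
  · intro hx
    exact ⟨g * x * g⁻¹, hx, by group⟩

/-- Let `G` be a finite group, `H ≤ G`, `I ◁ D ≤ G`, and `C = ⟨c⟩ ≤ D` cyclic with
`D = C·I`.  For `g ∈ G`, the orbit of the double coset `IgH` under the left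
`C`-action on `I\G/H` has cardinality `|C^g| / |C^g ∩ (I^g · (D^g ∩ H))|`. -/
theorem card_cyclic_orbit_on_dosets
    (G : Type*) [Group G] [Fintype G] (H D I : Subgroup G) (c : G)
    (hID : I ≤ D)
    (hnormal : ∀ d ∈ D, ∀ i ∈ I, d * i * d⁻¹ ∈ I)
    (hc : c ∈ D)
    (hCI : ∀ d ∈ D, ∃ m : ℕ, ∃ i ∈ I, d = c ^ m * i)
    (g : G) :
    Set.ncard {q : DoubleCoset.Quotient (I : Set G) (H : Set G) |
        ∃ m : ℕ, q = DoubleCoset.mk I H (c ^ m * g)} =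
      Set.ncard (setConj (Subgroup.zpowers c : Set G) g) /
        Set.ncard (setConj (Subgroup.zpowers c : Set G) g ∩
          (setConj (I : Set G) g * (setConj (D : Set G) g ∩ (H : Set G)))) := by
  classical
  set φ : G →* G := (MulAut.conj g).toMonoidHom with hφ
  have hφ_apply : ∀ x : G, φ x = g * x * g⁻¹ := fun x => rfl
  set C' : Subgroup G := (Subgroup.zpowers c).comap φ with hC'
  set I' : Subgroup G := I.comap φ with hI'
  set D' : Subgroup G := D.comap φ with hD'
  have hI'D' : I' ≤ D' := Subgroup.comap_mono hID
  have hC'D' : C' ≤ D' := Subgroup.comap_mono ((Subgroup.zpowers_le).mpr hc)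
  -- conjugation by elements of D' preserves I'
  have hconj : ∀ x ∈ D', ∀ i ∈ I', x * i * x⁻¹ ∈ I' := by
    intro x hx i hi
    have := hnormal (g * x * g⁻¹) hx (g * i * g⁻¹) hi
    simp only [hI', Subgroup.mem_comap, hφ_apply]
    convert this using 1
    group
  -- the S subgroup
  set S : Subgroup G :=
    { carrier := (C' : Set G) ∩ ((I' : Set G) * ((D' : Set G) ∩ (H : Set G)))
      one_mem' := ⟨C'.one_mem, 1, I'.one_mem, 1, ⟨D'.one_mem, H.one_mem⟩, by simp⟩
      mul_mem' := by
        rintro x y ⟨hxC, i₁, hi₁, h₁, ⟨hd₁, hh₁⟩, rfl⟩ ⟨hyC, i₂, hi₂, h₂, ⟨hd₂, hh₂⟩, rfl⟩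
        refine ⟨C'.mul_mem hxC hyC, i₁ * (h₁ * i₂ * h₁⁻¹), ?_, h₁ * h₂,
          ⟨D'.mul_mem hd₁ hd₂, H.mul_mem hh₁ hh₂⟩, by group⟩
        exact I'.mul_mem hi₁ (hconj h₁ hd₁ i₂ hi₂)
      inv_mem' := by
        rintro x ⟨hxC, i, hi, h, ⟨hd, hh⟩, rfl⟩
        refine ⟨C'.inv_mem hxC, h⁻¹ * i⁻¹ * h, ?_, h⁻¹,
          ⟨D'.inv_mem hd, H.inv_mem hh⟩, by group⟩
        have := hconj h⁻¹ (D'.inv_mem hd) i⁻¹ (I'.inv_mem hi)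
        simpa using this } with hS
  have hSC : S ≤ C' := fun x hx => hx.1
  have hSmem : ∀ x : G, x ∈ S ↔ x ∈ C' ∧ ∃ i ∈ I', ∃ h, (h ∈ D' ∧ h ∈ H) ∧ x = i * h := by
    intro x
    constructor
    · rintro ⟨h1, i, hi, h, ⟨hd, hh⟩, rfl⟩
      exact ⟨h1, i, hi, h, ⟨hd, hh⟩, rfl⟩
    · rintro ⟨h1, i, hi, h, ⟨hd, hh⟩, rfl⟩
      exact ⟨h1, i, hi, h, ⟨hd, hh⟩, rfl⟩
  -- key: for x y ∈ C', mk (g*x) = mk (g*y) ↔ x⁻¹ * y ∈ S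
  have key : ∀ x y : G, x ∈ C' → y ∈ C' →
      (DoubleCoset.mk I H (g * x) = DoubleCoset.mk I H (g * y) ↔ x⁻¹ * y ∈ S) := by
    intro x y hx hy
    rw [DoubleCoset.eq]
    constructor
    · rintro ⟨i, hi, h, hh, heq⟩
      -- g * y = i * (g * x) * h, so x⁻¹ * y = (x⁻¹ * (g⁻¹*i*g) * x) * h
      have hi' : g⁻¹ * i * g ∈ I' := by
        simp only [hI', Subgroup.mem_comap, hφ_apply]
        convert hi using 1; group
      have hxD : x ∈ D' := hC'D' hx
      have hi'' : x⁻¹ * (g⁻¹ * i * g) * x ∈ I' := by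
        have := hconj x⁻¹ (D'.inv_mem hxD) (g⁻¹ * i * g) hi'
        simpa using this
      have hval : x⁻¹ * y = (x⁻¹ * (g⁻¹ * i * g) * x) * h := by
        have : y = g⁻¹ * (i * (g * x) * h) := by rw [← heq]; group
        rw [this]; group
      have hhD : h ∈ D' := by
        have h1 : h = (x⁻¹ * (g⁻¹ * i * g) * x)⁻¹ * (x⁻¹ * y) := by rw [hval]; group
        rw [h1]
        exact D'.mul_mem (D'.inv_mem (hI'D' hi''))
          (D'.mul_mem (D'.inv_mem hxD) (hC'D' hy))
      rw [hSmem]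
      exact ⟨C'.mul_mem (C'.inv_mem hx) hy, _, hi'', h, ⟨hhD, hh⟩, hval⟩
    · intro hxy
      rw [hSmem] at hxy
      obtain ⟨-, i, hi, h, ⟨hd, hh⟩, hval⟩ := hxy
      have hxD : x ∈ D' := hC'D' hx
      have hi2 : x * i * x⁻¹ ∈ I' := hconj x hxD i hi
      refine ⟨g * (x * i * x⁻¹) * g⁻¹, hi2, h, hh, ?_⟩
      have hy' : y = x * (i * h) := by rw [← hval]; group
      rw [hy']; group
  -- the orbit as a subtype, and the equivalence with C' ⧸ S'
  set S' := S.subgroupOf C' with hS'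
  set O : Set (DoubleCoset.Quotient (I : Set G) (H : Set G)) :=
    {q | ∃ m : ℕ, q = DoubleCoset.mk I H (c ^ m * g)} with hO
  have hmemO : ∀ x : C', DoubleCoset.mk I H (g * (x : G)) ∈ O := by
    rintro ⟨x, hx⟩
    simp only [hC', Subgroup.mem_comap, hφ_apply, Subgroup.mem_zpowers_iff] at hx
    obtain ⟨k, hk⟩ := hx
    have hord : (0:ℤ) < (orderOf c : ℤ) := by
      exact_mod_cast (orderOf_pos c)
    refine ⟨(k % (orderOf c : ℤ)).toNat, ?_⟩
    have h1 : c ^ ((k % (orderOf c : ℤ)).toNat) = c ^ k := by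
      rw [← zpow_natCast, Int.toNat_of_nonneg (Int.emod_nonneg k (by omega)),
        zpow_mod_orderOf]
    have h2 : g * x = c ^ k * g := by
      have : g * x * g⁻¹ * g = c ^ k * g := by rw [hk]
      simpa [mul_assoc] using this
    simp only [Set.mem_setOf_eq, h1, ← h2]
  set f : C' → O := fun x => ⟨DoubleCoset.mk I H (g * (x : G)), hmemO x⟩ with hf
  have hresp : ∀ x y : C', (QuotientGroup.leftRel S') x y → f x = f y := by
    intro x y hrel
    rw [QuotientGroup.leftRel_apply] at hrel
    have : (x : G)⁻¹ * y ∈ S := hrel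
    exact Subtype.ext ((key x y x.2 y.2).mpr this)
  set F : C' ⧸ S' → O := Quotient.lift f hresp with hF
  have hFbij : Function.Bijective F := by
    constructor
    · intro q₁ q₂
      refine Quotient.inductionOn₂ q₁ q₂ ?_
      intro x y hfxy
      have : (x : G)⁻¹ * y ∈ S := (key x y x.2 y.2).mp (Subtype.ext_iff.mp hfxy)
      exact Quotient.sound ((QuotientGroup.leftRel_apply).mpr this)
    · rintro ⟨q, m, rfl⟩
      have hx : g⁻¹ * c ^ m * g ∈ C' := by
        simp only [hC', Subgroup.mem_comap, hφ_apply, Subgroup.mem_zpowers_iff]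
        exact ⟨(m : ℤ), by rw [zpow_natCast]; group⟩
      refine ⟨Quotient.mk _ ⟨g⁻¹ * c ^ m * g, hx⟩, ?_⟩
      simp only [hF, Quotient.lift_mk, hf]
      apply Subtype.ext
      simp only
      congr 1
      group
  -- cardinality bookkeeping
  have hcard1 : Set.ncard O = Nat.card (C' ⧸ S') := by
    rw [← Nat.card_coe_set_eq]
    exact (Nat.card_congr (Equiv.ofBijective F hFbij)).symm
  have hcard2 : Nat.card (C' ⧸ S') = S'.index := (Subgroup.index_eq_card S').symm
  have hcardS : Nat.card S' = Nat.card S :=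
    Nat.card_congr (Subgroup.subgroupOfEquivOfLe hSC).toEquiv
  have hmul : S'.index * Nat.card S = Nat.card C' := by
    rw [← hcardS]; exact Subgroup.index_mul_card S'
  have hSpos : 0 < Nat.card S := Nat.card_pos
  -- rewrite the RHS sets
  have hset1 : setConj (Subgroup.zpowers c : Set G) g = (C' : Set G) :=
    setConj_subgroup_eq _ g
  have hset2 : setConj (Subgroup.zpowers c : Set G) g ∩
      (setConj (I : Set G) g * (setConj (D : Set G) g ∩ (H : Set G))) = (S : Set G) := by
    rw [hset1, setConj_subgroup_eq I g, setConj_subgroup_eq D g]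
    rfl
  rw [hset2, hset1, hcard1, hcard2]
  rw [← Nat.card_coe_set_eq, ← Nat.card_coe_set_eq]
  simp only [SetLike.coe_sort_coe]
  rw [← hmul, Nat.mul_div_cancel _ hSpos]
end

section
/- Let G be a finite group with subgroups H₁, H₂, K. If for every conjugacy class 𝒞 of G we have |𝒞 ∩ H₁| = |𝒞 ∩ H₂|, then |K\G/H₁| = |K\G/H₂|. -/
open DoubleCoset MulAction Finset

section Aux

variable {G : Type*} [Group G]

/-- The action of `K × H` on `G` by `(k,h) • g = k * g * h⁻¹`. -/
instance dosetAction (K H : Subgroup G) : MulAction (K × H) G where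
  smul p g := (p.1 : G) * g * (p.2 : G)⁻¹
  one_smul g := by
    show ((1 : K) : G) * g * (((1 : H) : G))⁻¹ = g
    simp
  mul_smul p q g := by
    show ((p.1 * q.1 : K) : G) * g * (((p.2 * q.2 : H) : G))⁻¹ =
      (p.1 : G) * ((q.1 : G) * g * (q.2 : G)⁻¹) * (p.2 : G)⁻¹
    push_cast
    group

lemma dosetAction_smul_def (K H : Subgroup G) (p : K × H) (g : G) :
    p • g = (p.1 : G) * g * (p.2 : G)⁻¹ := rfl

/-- The double coset quotient is equivalent to the orbit quotient of the above action. -/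
noncomputable def dosetEquivOrbits (K H : Subgroup G) :
    DoubleCoset.Quotient (K : Set G) (H : Set G) ≃ Quotient (orbitRel (K × H) G) :=
  Quotient.congrRight fun a b => by
    rw [DoubleCoset.rel_iff, orbitRel_apply, MulAction.mem_orbit_iff]
    constructor
    · rintro ⟨k, hk, h, hh, rfl⟩
      refine ⟨(⟨k, hk⟩⁻¹, ⟨h, hh⟩), ?_⟩
      rw [dosetAction_smul_def]
      simp only [InvMemClass.coe_inv]
      group
    · rintro ⟨⟨k, h⟩, hp⟩
      refine ⟨(k : G)⁻¹, K.inv_mem k.2, (h : G), h.2, ?_⟩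
      rw [← hp, dosetAction_smul_def]
      group

end Aux

section ClassSum

variable {G : Type*} [Group G] [Fintype G]

/-- Summing a class function over Gassmann-equivalent subgroups gives the same result. -/
lemma sum_class_fun_eq (H₁ H₂ : Subgroup G)
    (hgass : ∀ g : G,
      Set.ncard ({x | IsConj g x} ∩ (H₁ : Set G)) =
        Set.ncard ({x | IsConj g x} ∩ (H₂ : Set G)))
    (f : G → ℕ) (hf : ∀ x y, IsConj x y → f x = f y) :
    ∑ g ∈ (Set.toFinite ((H₁ : Set G))).toFinset, f g =
      ∑ g ∈ (Set.toFinite ((H₂ : Set G))).toFinset, f g := by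
  classical
  have key : ∀ (H : Subgroup G), ∑ g ∈ (Set.toFinite ((H : Set G))).toFinset, f g =
      ∑ c : ConjClasses G,
        (Set.ncard ({x | IsConj (Quotient.out c) x} ∩ (H : Set G))) * f (Quotient.out c) := by
    intro H
    rw [← Finset.sum_fiberwise ((Set.toFinite ((H : Set G))).toFinset)
      (fun g => ConjClasses.mk g) f]
    refine Finset.sum_congr rfl fun c _ => ?_
    set r := Quotient.out c with hrdef
    have hrep : ConjClasses.mk r = c := Quotient.out_eq c
    have hconst : ∀ g ∈ ((Set.toFinite ((H : Set G))).toFinset).filter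
        (fun g => ConjClasses.mk g = c), f g = f r := by
      intro g hg
      simp only [Finset.mem_filter] at hg
      exact (hf _ _ (ConjClasses.mk_eq_mk_iff_isConj.mp (hrep.trans hg.2.symm))).symm
    rw [Finset.sum_congr rfl hconst, Finset.sum_const, smul_eq_mul]
    congr 1
    rw [Set.ncard_eq_toFinset_card']
    congr 1
    ext g
    simp only [Finset.mem_filter, Set.Finite.mem_toFinset, Set.mem_toFinset, Set.mem_inter_iff,
      Set.mem_setOf_eq, SetLike.mem_coe]
    constructor
    · rintro ⟨hgH, hgc⟩
      exact ⟨ConjClasses.mk_eq_mk_iff_isConj.mp (hrep.trans hgc.symm), hgH⟩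
    · rintro ⟨hconj, hgH⟩
      exact ⟨hgH, by rw [← hrep, ConjClasses.mk_eq_mk_iff_isConj]; exact hconj.symm⟩
  rw [key H₁, key H₂]
  exact Finset.sum_congr rfl fun c _ => by rw [hgass]

end ClassSum

/-- If `H₁, H₂` are Gassmann-equivalent subgroups of a finite group `G`
(every conjugacy class of `G` meets them in sets of equal cardinality),
then `|K\G/H₁| = |K\G/H₂|` for every subgroup `K ≤ G`. -/
theorem card_dosets_eq_of_gassmann
    (G : Type*) [Group G] [Fintype G] (H₁ H₂ K : Subgroup G)
    (hgass : ∀ g : G,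
      Set.ncard ({x | IsConj g x} ∩ (H₁ : Set G)) =
        Set.ncard ({x | IsConj g x} ∩ (H₂ : Set G))) :
    Nat.card (DoubleCoset.Quotient (K : Set G) (H₁ : Set G)) =
      Nat.card (DoubleCoset.Quotient (K : Set G) (H₂ : Set G)) := by
  classical
  -- the class function counting conjugators into K
  set f : G → ℕ := fun x => (Finset.univ.filter (fun g : G => g * x * g⁻¹ ∈ K)).card with hfdef
  have hf : ∀ x y, IsConj x y → f x = f y := by
    intro x y hxy
    rw [isConj_iff] at hxy
    obtain ⟨c, hc⟩ := hxy
    apply Finset.card_bij (fun g _ => g * c⁻¹)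
    · intro g hg
      simp only [hfdef, Finset.mem_filter, Finset.mem_univ, true_and] at hg ⊢
      have : g * c⁻¹ * y * (g * c⁻¹)⁻¹ = g * x * g⁻¹ := by rw [← hc]; group
      rw [this]; exact hg
    · intro a _ b _ hab
      exact mul_right_cancel hab
    · intro g hg
      refine ⟨g * c, ?_, by group⟩
      simp only [hfdef, Finset.mem_filter, Finset.mem_univ, true_and] at hg ⊢
      have : g * c * x * (g * c)⁻¹ = g * y * g⁻¹ := by rw [← hc]; group
      rw [this]; exact hg
  -- counting fibers: ∑_{k ∈ K} #{g : g h g⁻¹ = k} = #{g : g h g⁻¹ ∈ K}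
  have step : ∀ h : G,
      ∑ k : K, (Finset.univ.filter (fun g : G => g * h * g⁻¹ = (k : G))).card = f h := by
    intro h
    have hmap : ∀ g ∈ Finset.univ.filter (fun g : G => g * h * g⁻¹ ∈ K),
        g * h * g⁻¹ ∈ (Set.toFinite (K : Set G)).toFinset := by
      intro g hg
      simp only [Finset.mem_filter, Finset.mem_univ, true_and] at hg
      simpa using hg
    rw [hfdef]
    simp only
    rw [Finset.card_eq_sum_card_fiberwise hmap,
      Finset.sum_subtype ((Set.toFinite (K : Set G)).toFinset) (p := fun x => x ∈ K)
        (fun x => by rw [Set.Finite.mem_toFinset]; exact SetLike.mem_coe)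
        (fun k => ((Finset.univ.filter (fun g : G => g * h * g⁻¹ ∈ K)).filter
          (fun g => g * h * g⁻¹ = k)).card)]
    refine Finset.sum_congr rfl fun k _ => ?_
    congr 1
    ext g
    simp only [Finset.mem_filter, Finset.mem_univ, true_and]
    constructor
    · rintro h'
      exact ⟨h' ▸ k.2, h'⟩
    · rintro ⟨_, h'⟩
      exact h'
  -- Burnside computation
  have burnside : ∀ (H : Subgroup G),
      Nat.card (DoubleCoset.Quotient (K : Set G) (H : Set G)) * (Nat.card K * Nat.card H) =
        ∑ g ∈ (Set.toFinite ((H : Set G))).toFinset, f g := by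
    intro H
    letI : ∀ p : K × H, Fintype (fixedBy G p) := fun p => Fintype.ofFinite _
    letI : Fintype (Quotient (orbitRel (K × H) G)) := Fintype.ofFinite _
    have hB := MulAction.sum_card_fixedBy_eq_card_orbits_mul_card_group (K × H) G
    have hcard : Nat.card (DoubleCoset.Quotient (K : Set G) (H : Set G)) =
        Fintype.card (Quotient (orbitRel (K × H) G)) := by
      rw [Nat.card_congr (dosetEquivOrbits K H), Nat.card_eq_fintype_card]
    have hfix : ∀ p : K × H, Fintype.card (fixedBy G p) =
        (Finset.univ.filter (fun g : G => g * (p.2 : G) * g⁻¹ = (p.1 : G))).card := by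
      intro p
      rw [← Set.toFinset_card]
      congr 1
      ext g
      simp only [Set.mem_toFinset, MulAction.mem_fixedBy, Finset.mem_filter, Finset.mem_univ,
        true_and, dosetAction_smul_def]
      rw [mul_inv_eq_iff_eq_mul, mul_inv_eq_iff_eq_mul, eq_comm]
    calc Nat.card (DoubleCoset.Quotient (K : Set G) (H : Set G)) * (Nat.card K * Nat.card H)
        = Fintype.card (Quotient (orbitRel (K × H) G)) * Fintype.card (K × H) := by
          rw [hcard, Fintype.card_prod, Nat.card_eq_fintype_card, Nat.card_eq_fintype_card]
      _ = ∑ p : K × H, Fintype.card (fixedBy G p) := hB.symm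
      _ = ∑ p : K × H,
            (Finset.univ.filter (fun g : G => g * (p.2 : G) * g⁻¹ = (p.1 : G))).card :=
          Finset.sum_congr rfl fun p _ => hfix p
      _ = ∑ h : H, ∑ k : K,
            (Finset.univ.filter (fun g : G => g * (h : G) * g⁻¹ = (k : G))).card := by
          rw [Fintype.sum_prod_type]
          exact Finset.sum_comm
      _ = ∑ h : H, f (h : G) := Finset.sum_congr rfl fun h _ => step (h : G)
      _ = ∑ g ∈ (Set.toFinite ((H : Set G))).toFinset, f g :=
          (Finset.sum_subtype _ (p := fun x => x ∈ H)
            (fun x => by rw [Set.Finite.mem_toFinset]; exact SetLike.mem_coe) f).symm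
  have h1 := burnside H₁
  have h2 := burnside H₂
  have hsum := sum_class_fun_eq H₁ H₂ hgass f hf
  have hcardH : Nat.card H₁ = Nat.card H₂ := by
    have h := sum_class_fun_eq H₁ H₂ hgass (fun _ => 1) (fun _ _ _ => rfl)
    have e : ∀ (H : Subgroup G),
        ∑ _g ∈ (Set.toFinite ((H : Set G))).toFinset, 1 = Nat.card H := by
      intro H
      rw [Finset.sum_const, smul_eq_mul, mul_one, ← Set.ncard_eq_toFinset_card]
      exact (Nat.card_coe_set_eq (H : Set G)).symm
    rw [e H₁, e H₂] at h
    exact h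
  rw [hcardH] at h1
  have hpos : 0 < Nat.card K * Nat.card H₂ :=
    Nat.mul_pos Nat.card_pos Nat.card_pos
  exact Nat.eq_of_mul_eq_mul_right hpos (by rw [h1, h2, hsum])
end

section
/- Let G be a finite group and H₁, H₂ ≤ G. Suppose that for every cyclic subgroup C ≤ G, |C\G/H₁| = |C\G/H₂|. Then for every conjugacy class 𝒞 of G, |𝒞 ∩ H₁| = |𝒞 ∩ H₂|. -/
open DoubleCoset

section GassmannAux

open MulAction

variable {G : Type*} [Group G] [Fintype G]

private lemma gassmann_fixedBy_subset_of_mem_zpowers {α : Type*} [MulAction G α] {u v : G}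
    (h : u ∈ Subgroup.zpowers v) : fixedBy α v ⊆ fixedBy α u := by
  rw [← mem_powers_iff_mem_zpowers] at h
  obtain ⟨n, rfl⟩ := h
  intro x hx
  have hx' : v • x = x := hx
  show v ^ n • x = x
  induction n with
  | zero => simp
  | succ n ihn => rw [pow_succ, mul_smul, hx', ihn]

private lemma gassmann_fixedBy_eq_of_zpowers_eq {α : Type*} [MulAction G α] {c d : G}
    (h : Subgroup.zpowers c = Subgroup.zpowers d) :
    fixedBy α c = fixedBy α d :=
  Set.Subset.antisymm
    (gassmann_fixedBy_subset_of_mem_zpowers (h ▸ Subgroup.mem_zpowers d))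
    (gassmann_fixedBy_subset_of_mem_zpowers (h.symm ▸ Subgroup.mem_zpowers c))

private lemma gassmann_zpowers_eq_of_orderOf_eq {c g : G} (h : c ∈ Subgroup.zpowers g)
    (ho : orderOf c = orderOf g) : Subgroup.zpowers c = Subgroup.zpowers g := by
  apply SetLike.coe_injective
  refine Set.eq_of_subset_of_ncard_le (fun x hx => Subgroup.zpowers_le.mpr h hx) ?_
    (Set.toFinite _)
  rw [← Nat.card_coe_set_eq, ← Nat.card_coe_set_eq]
  simp only [SetLike.coe_sort_coe, Nat.card_zpowers, ho, le_refl]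

private lemma gassmann_card_doset_eq (C H : Subgroup G) :
    Nat.card (DoubleCoset.Quotient (C : Set G) (H : Set G)) =
      Nat.card (orbitRel.Quotient C (G ⧸ H)) := by
  let f : DoubleCoset.Quotient (C : Set G) (H : Set G) → orbitRel.Quotient C (G ⧸ H) :=
    Quotient.lift (fun g => (Quotient.mk (orbitRel C (G ⧸ H)) ((g : G) : G ⧸ H)))
      (by
        intro a b hab
        obtain ⟨c, hc, h, hh, rfl⟩ := DoubleCoset.rel_iff.mp hab
        have h1 : ((c * a * h : G) : G ⧸ H) = ((c * a : G) : G ⧸ H) := by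
          rw [QuotientGroup.eq]
          rw [show (c * a * h)⁻¹ * (c * a) = h⁻¹ by group]
          exact H.inv_mem hh
        have hb : ((c * a * h : G) : G ⧸ H) = (⟨c, hc⟩ : C) • ((a : G) : G ⧸ H) := by
          rw [h1]; rfl
        exact (Quotient.sound (hb ▸ MulAction.mem_orbit ((a : G) : G ⧸ H) (⟨c, hc⟩ : C))).symm)
  have hf : Function.Bijective f := by
    constructor
    · intro x y
      refine Quotient.inductionOn₂ x y fun a b hab => ?_
      have horb : ((a : G) : G ⧸ H) ∈ orbit C ((b : G) : G ⧸ H) := Quotient.exact hab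
      obtain ⟨c, hc⟩ := MulAction.mem_orbit_iff.mp horb
      have hc' : (((c : G) * b : G) : G ⧸ H) = ((a : G) : G ⧸ H) := hc
      rw [QuotientGroup.eq] at hc'
      refine Quotient.sound (DoubleCoset.rel_iff.mpr
        ⟨(c : G)⁻¹, C.inv_mem c.2, (((c : G) * b)⁻¹ * a)⁻¹, H.inv_mem hc', ?_⟩)
      group
    · intro q
      refine Quotient.inductionOn q fun x => ?_
      obtain ⟨a, rfl⟩ := QuotientGroup.mk_surjective x
      exact ⟨Quotient.mk _ a, rfl⟩
  exact Nat.card_congr (Equiv.ofBijective f hf)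

private lemma gassmann_burnside (C H : Subgroup G) [Fintype C] :
    (∑ c : C, Nat.card (fixedBy (G ⧸ H) (c : G))) =
      Nat.card (orbitRel.Quotient C (G ⧸ H)) * Nat.card C := by
  classical
  letI : Fintype (G ⧸ H) := Fintype.ofFinite _
  letI : Fintype (orbitRel.Quotient C (G ⧸ H)) := Fintype.ofFinite _
  letI : ∀ c : C, Fintype (fixedBy (G ⧸ H) c) := fun c => Fintype.ofFinite _
  have hb := MulAction.sum_card_fixedBy_eq_card_orbits_mul_card_group C (G ⧸ H)
  have hfix : ∀ c : C, fixedBy (G ⧸ H) (c : G) = fixedBy (G ⧸ H) c := fun c => rfl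
  calc (∑ c : C, Nat.card (fixedBy (G ⧸ H) (c : G)))
      = ∑ c : C, Fintype.card (fixedBy (G ⧸ H) c) := by
        refine Finset.sum_congr rfl fun c _ => ?_
        rw [hfix c, Nat.card_eq_fintype_card]
    _ = Fintype.card (orbitRel.Quotient C (G ⧸ H)) * Fintype.card C := hb
    _ = Nat.card (orbitRel.Quotient C (G ⧸ H)) * Nat.card C := by
        rw [Nat.card_eq_fintype_card, Nat.card_eq_fintype_card]

private lemma gassmann_fixed_mul (H : Subgroup G) (g : G) :
    Nat.card {x : G | x⁻¹ * g * x ∈ H} =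
      Nat.card (fixedBy (G ⧸ H) g) * Nat.card H := by
  have hset : {x : G | x⁻¹ * g * x ∈ H} =
      QuotientGroup.mk ⁻¹' (fixedBy (G ⧸ H) g) := by
    ext x
    simp only [Set.mem_setOf_eq, Set.mem_preimage, MulAction.mem_fixedBy]
    rw [MulAction.Quotient.smul_mk, smul_eq_mul, QuotientGroup.eq]
    rw [show (g * x)⁻¹ * x = (x⁻¹ * g * x)⁻¹ by group, inv_mem_iff]
  rw [hset, Nat.card_congr (QuotientGroup.preimageMkEquivSubgroupProdSet H _),
    Nat.card_prod, mul_comm]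

private lemma gassmann_conj_mul (H : Subgroup G) (g : G) :
    Nat.card {x : G | x⁻¹ * g * x ∈ H} =
      Set.ncard ({x | IsConj g x} ∩ (H : Set G)) *
        Nat.card (Subgroup.centralizer {g}) := by
  classical
  rw [Nat.card_coe_set_eq, Set.ncard_eq_toFinset_card',
    Set.ncard_eq_toFinset_card' ({x | IsConj g x} ∩ (H : Set G))]
  rw [Finset.card_eq_sum_card_fiberwise
    (f := fun x => x⁻¹ * g * x) (t := ({x | IsConj g x} ∩ (H : Set G)).toFinset)
    (fun x hx => by
      simp only [Set.mem_toFinset, Set.mem_setOf_eq, Set.mem_inter_iff,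
        SetLike.mem_coe] at hx ⊢
      exact ⟨isConj_iff.mpr ⟨x⁻¹, by group⟩, hx⟩)]
  rw [Finset.sum_congr rfl (fun y hy => ?_), Finset.sum_const, smul_eq_mul]
  -- each fiber has the cardinality of the centralizer
  simp only [Set.mem_toFinset, Set.mem_inter_iff, Set.mem_setOf_eq, SetLike.mem_coe] at hy
  obtain ⟨hyc, hyH⟩ := hy
  obtain ⟨c, hc⟩ := isConj_iff.mp hyc
  have hx₀ : (c⁻¹)⁻¹ * g * c⁻¹ = y := by rw [inv_inv]; exact hc
  set x₀ := c⁻¹ with hx₀def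
  rw [show Nat.card (Subgroup.centralizer {g}) =
      ((Subgroup.centralizer {g} : Set G)).toFinset.card by
    rw [← Set.ncard_eq_toFinset_card', ← Nat.card_coe_set_eq, SetLike.coe_sort_coe]]
  refine Finset.card_bij' (fun x _ => x * x₀⁻¹) (fun z _ => z * x₀) ?_ ?_ ?_ ?_
  · intro x hx
    simp only [Finset.mem_filter, Set.mem_toFinset, Set.mem_setOf_eq] at hx
    simp only [Set.mem_toFinset, SetLike.mem_coe]
    rw [Subgroup.mem_centralizer_iff]
    intro h hh
    rw [Set.mem_singleton_iff] at hh
    rw [hh]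
    have hxy : x⁻¹ * g * x = x₀⁻¹ * g * x₀ := hx.2.trans hx₀.symm
    have := congrArg (fun t => x * t * x₀⁻¹) hxy
    simpa [mul_assoc] using this
  · intro z hz
    simp only [Set.mem_toFinset, SetLike.mem_coe, Subgroup.mem_centralizer_iff] at hz
    have hzc : g * z = z * g := hz g rfl
    have h1 : z⁻¹ * g * z = g := by rw [mul_assoc, hzc, inv_mul_cancel_left]
    simp only [Finset.mem_filter, Set.mem_toFinset, Set.mem_setOf_eq]
    have h2 : (z * x₀)⁻¹ * g * (z * x₀) = x₀⁻¹ * (z⁻¹ * g * z) * x₀ := by group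
    rw [h2, h1, hx₀]
    exact ⟨hyH, rfl⟩
  · intro x _; group
  · intro z _; group

end GassmannAux

/-- If `H₁, H₂` are subgroups of a finite group `G` such that
`|C\G/H₁| = |C\G/H₂|` for every cyclic subgroup `C ≤ G`, then `H₁` and `H₂`
are Gassmann equivalent: every conjugacy class of `G` meets them in sets of
equal cardinality. -/
theorem gassmann_of_card_dosets_eq_for_cyclic
    (G : Type*) [Group G] [Fintype G] (H₁ H₂ : Subgroup G)
    (hdc : ∀ C : Subgroup G, IsCyclic C →
      Nat.card (DoubleCoset.Quotient (C : Set G) (H₁ : Set G)) =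
        Nat.card (DoubleCoset.Quotient (C : Set G) (H₂ : Set G))) :
    ∀ g : G,
      Set.ncard ({x | IsConj g x} ∩ (H₁ : Set G)) =
        Set.ncard ({x | IsConj g x} ∩ (H₂ : Set G)) := by
  classical
  -- Step 1: fixed point counts agree, by strong induction on the order
  have key : ∀ n (g : G), orderOf g = n →
      Nat.card (MulAction.fixedBy (G ⧸ H₁) g) =
        Nat.card (MulAction.fixedBy (G ⧸ H₂) g) := by
    intro n
    induction n using Nat.strong_induction_on with
    | _ n ih =>
      intro g hg
      set C := Subgroup.zpowers g with hC
      have hcyc : IsCyclic C := by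
        refine ⟨⟨⟨g, Subgroup.mem_zpowers g⟩, fun x => ?_⟩⟩
        obtain ⟨k, hk⟩ := x.2
        exact ⟨k, Subtype.ext (by simpa using hk)⟩
      letI : Fintype C := Fintype.ofFinite _
      have horb : Nat.card (MulAction.orbitRel.Quotient C (G ⧸ H₁)) =
          Nat.card (MulAction.orbitRel.Quotient C (G ⧸ H₂)) :=
        (gassmann_card_doset_eq C H₁).symm.trans
          ((hdc C hcyc).trans (gassmann_card_doset_eq C H₂))
      have hsum : (∑ c : C, Nat.card (MulAction.fixedBy (G ⧸ H₁) (c : G))) =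
          ∑ c : C, Nat.card (MulAction.fixedBy (G ⧸ H₂) (c : G)) := by
        rw [gassmann_burnside C H₁, gassmann_burnside C H₂, horb]
      set p : C → Prop := fun c => Subgroup.zpowers (c : G) = C with hp
      rw [← Finset.sum_filter_add_sum_filter_not Finset.univ p
          (fun c : C => Nat.card (MulAction.fixedBy (G ⧸ H₁) (c : G))),
        ← Finset.sum_filter_add_sum_filter_not Finset.univ p
          (fun c : C => Nat.card (MulAction.fixedBy (G ⧸ H₂) (c : G)))] at hsum
      have hnpos : 0 < n := hg ▸ orderOf_pos g
      have hnot : (∑ c ∈ Finset.univ.filter (fun c => ¬ p c),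
            Nat.card (MulAction.fixedBy (G ⧸ H₁) (c : G))) =
          ∑ c ∈ Finset.univ.filter (fun c => ¬ p c),
            Nat.card (MulAction.fixedBy (G ⧸ H₂) (c : G)) := by
        refine Finset.sum_congr rfl fun c hc => ?_
        simp only [Finset.mem_filter, Finset.mem_univ, true_and] at hc
        have hdvd : orderOf (c : G) ∣ n := hg ▸ orderOf_dvd_of_mem_zpowers c.2
        have hne : orderOf (c : G) ≠ n := by
          intro he
          exact hc (gassmann_zpowers_eq_of_orderOf_eq c.2 (he.trans hg.symm))
        exact ih _ (Nat.lt_of_le_of_ne (Nat.le_of_dvd hnpos hdvd) hne) _ rfl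
      have hgen : ∀ (H : Subgroup G) (c : C), p c →
          Nat.card (MulAction.fixedBy (G ⧸ H) (c : G)) =
            Nat.card (MulAction.fixedBy (G ⧸ H) g) := fun H c hpc => by
        rw [gassmann_fixedBy_eq_of_zpowers_eq hpc]
      have h1 : (∑ c ∈ Finset.univ.filter p,
            Nat.card (MulAction.fixedBy (G ⧸ H₁) (c : G))) =
          (Finset.univ.filter p).card * Nat.card (MulAction.fixedBy (G ⧸ H₁) g) := by
        rw [Finset.sum_congr rfl fun c hc =>
          hgen H₁ c (by simpa using (Finset.mem_filter.mp hc).2)]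
        rw [Finset.sum_const, smul_eq_mul]
      have h2 : (∑ c ∈ Finset.univ.filter p,
            Nat.card (MulAction.fixedBy (G ⧸ H₂) (c : G))) =
          (Finset.univ.filter p).card * Nat.card (MulAction.fixedBy (G ⧸ H₂) g) := by
        rw [Finset.sum_congr rfl fun c hc =>
          hgen H₂ c (by simpa using (Finset.mem_filter.mp hc).2)]
        rw [Finset.sum_const, smul_eq_mul]
      rw [h1, h2, hnot] at hsum
      have hcanc := Nat.add_right_cancel hsum
      have hkpos : 0 < (Finset.univ.filter p).card := by
        refine Finset.card_pos.mpr ⟨⟨g, Subgroup.mem_zpowers g⟩, ?_⟩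
        simp only [Finset.mem_filter, Finset.mem_univ, true_and]
        rfl
      exact Nat.eq_of_mul_eq_mul_left hkpos hcanc
  have key' : ∀ g : G, Nat.card (MulAction.fixedBy (G ⧸ H₁) g) =
      Nat.card (MulAction.fixedBy (G ⧸ H₂) g) := fun g => key _ g rfl
  -- Step 2: |H₁| = |H₂|
  have huniv : ∀ H : Subgroup G,
      MulAction.fixedBy (G ⧸ H) (1 : G) = Set.univ := fun H => by
    ext x; simp [MulAction.mem_fixedBy]
  have hquot : Nat.card (G ⧸ H₁) = Nat.card (G ⧸ H₂) := by
    have h1 := key' 1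
    rw [huniv H₁, huniv H₂, Nat.card_congr (Equiv.Set.univ (G ⧸ H₁)),
      Nat.card_congr (Equiv.Set.univ (G ⧸ H₂))] at h1
    exact h1
  have hqpos : 0 < Nat.card (G ⧸ H₂) := Nat.card_pos
  have hcardH : Nat.card H₁ = Nat.card H₂ := by
    have e1 := Subgroup.card_eq_card_quotient_mul_card_subgroup H₁
    have e2 := Subgroup.card_eq_card_quotient_mul_card_subgroup H₂
    rw [hquot] at e1
    rw [e1] at e2
    exact Nat.eq_of_mul_eq_mul_left hqpos e2
  -- Step 3: conclude
  intro g
  have hS : Nat.card {x : G | x⁻¹ * g * x ∈ H₁} =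
      Nat.card {x : G | x⁻¹ * g * x ∈ H₂} := by
    rw [gassmann_fixed_mul H₁ g, gassmann_fixed_mul H₂ g, key' g, hcardH]
  rw [gassmann_conj_mul H₁ g, gassmann_conj_mul H₂ g] at hS
  have hZpos : 0 < Nat.card (Subgroup.centralizer {g}) := Nat.card_pos
  exact Nat.eq_of_mul_eq_mul_right hZpos hS
end

section
/- Let G be a finite group with subgroups H₁, H₂ that are Gassmann equivalent (|𝒞 ∩ H₁| = |𝒞 ∩ H₂| for all conjugacy classes 𝒞). Let D ≤ G, I ◁ D with D/I cyclic, and choose cyclic C ≤ D with D = CI. Then for every divisor d of |C|, |C^d I\G/H₁| = |C^d I\G/H₂|, where C^d = {x^d : x ∈ C} and C^d I is the subgroup generated. Consequently the multisets of fiber sizes of the projections I\G/Hᵢ → D\G/Hᵢ coincide for i = 1, 2. -/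
open DoubleCoset Finset

section PartA
variable {G : Type*} [Group G] [Fintype G]

open scoped Classical

private noncomputable def centCard (x : G) : ℕ :=
  (univ.filter fun u : G => u * x * u⁻¹ = x).card

private lemma conjFiber_card {x y : G} (h : IsConj x y) :
    (univ.filter fun u : G => u * x * u⁻¹ = y).card = centCard x := by
  obtain ⟨u₀, hu₀⟩ := isConj_iff.1 h
  unfold centCard
  apply Finset.card_bij' (fun u _ => u₀⁻¹ * u) (fun v _ => u₀ * v)
  · intro u hu
    simp only [mem_filter, mem_univ, true_and] at hu ⊢
    have h2 : u * x * u⁻¹ = u₀ * x * u₀⁻¹ := hu.trans hu₀.symm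
    calc (u₀⁻¹*u)*x*(u₀⁻¹*u)⁻¹ = u₀⁻¹ * (u*x*u⁻¹) * u₀ := by group
      _ = u₀⁻¹ * (u₀*x*u₀⁻¹) * u₀ := by rw [h2]
      _ = x := by group
  · intro v hv
    simp only [mem_filter, mem_univ, true_and] at hv ⊢
    calc (u₀*v)*x*(u₀*v)⁻¹ = u₀ * (v*x*v⁻¹) * u₀⁻¹ := by group
      _ = u₀ * x * u₀⁻¹ := by rw [hv]
      _ = y := hu₀
  · intros; simp
  · intros; simp

private lemma class_mul_cent (x : G) :
    (univ.filter fun y : G => IsConj x y).card * centCard x = Fintype.card G := by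
  have key := Finset.card_eq_sum_card_fiberwise (f := fun u : G => u * x * u⁻¹)
    (s := univ) (t := univ.filter fun y : G => IsConj x y)
    (fun u _ => by simp only [Finset.mem_coe, mem_filter, mem_univ, true_and]; exact isConj_iff.2 ⟨u, rfl⟩)
  rw [Finset.card_univ] at key
  calc (univ.filter fun y : G => IsConj x y).card * centCard x
      = ∑ _y ∈ univ.filter (fun y : G => IsConj x y), centCard x := by
        rw [Finset.sum_const, smul_eq_mul]
    _ = ∑ y ∈ univ.filter (fun y : G => IsConj x y),
          (univ.filter fun u : G => u * x * u⁻¹ = y).card := by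
        refine Finset.sum_congr rfl fun y hy => ?_
        simp only [mem_filter, mem_univ, true_and] at hy
        exact (conjFiber_card hy).symm
    _ = Fintype.card G := key.symm

private lemma centCard_conj {x y : G} (h : IsConj x y) : centCard x = centCard y := by
  have hx := class_mul_cent x
  have hy := class_mul_cent y
  have hcl : (univ.filter fun z : G => IsConj x z) = univ.filter fun z : G => IsConj y z := by
    ext z; simp only [mem_filter, mem_univ, true_and]
    exact ⟨fun hz => h.symm.trans hz, fun hz => h.trans hz⟩
  rw [hcl] at hx
  have hpos : 0 < (univ.filter fun z : G => IsConj y z).card :=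
    Finset.card_pos.2 ⟨y, by simp only [mem_filter, mem_univ, true_and]; exact IsConj.refl y⟩
  exact Nat.eq_of_mul_eq_mul_left hpos (by rw [hx, hy])

private lemma class_fun_sum (H : Subgroup G) (f : G → ℕ)
    (hf : ∀ u x : G, f (u * x * u⁻¹) = f x) :
    Fintype.card G * ∑ x ∈ univ.filter (fun x : G => x ∈ H), f x =
      ∑ g : G, f g * centCard g * (univ.filter fun x : G => IsConj g x ∧ x ∈ H).card := by
  have hfc : ∀ {a b : G}, IsConj a b → f a = f b := by
    intro a b hab
    obtain ⟨u, hu⟩ := isConj_iff.1 hab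
    rw [← hu, hf]
  calc
    Fintype.card G * ∑ x ∈ univ.filter (fun x : G => x ∈ H), f x
        = ∑ x ∈ univ.filter (fun x : G => x ∈ H), Fintype.card G * f x := by
          rw [Finset.mul_sum]
    _ = ∑ x : G, if x ∈ H then Fintype.card G * f x else 0 := by
          rw [Finset.sum_filter]
    _ = ∑ x : G, ∑ g : G, if IsConj g x ∧ x ∈ H then f g * centCard g else 0 := by
          refine Finset.sum_congr rfl fun x _ => ?_
          by_cases hx : x ∈ H
          · simp only [hx, and_true, if_true]
            have h1 : ∑ g : G, (if IsConj g x then f g * centCard g else 0)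
                = ∑ g ∈ univ.filter (fun g : G => IsConj g x), f g * centCard g := by
              rw [Finset.sum_filter]
            have h2 : ∑ g ∈ univ.filter (fun g : G => IsConj g x), f g * centCard g
                = ∑ _g ∈ univ.filter (fun g : G => IsConj g x), f x * centCard x := by
              refine Finset.sum_congr rfl fun g hg => ?_
              simp only [mem_filter, mem_univ, true_and] at hg
              rw [hfc hg, centCard_conj hg]
            have hcl : (univ.filter fun g : G => IsConj g x)
                = univ.filter fun g : G => IsConj x g := by
              ext z; simp only [mem_filter, mem_univ, true_and]
              exact ⟨IsConj.symm, IsConj.symm⟩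
            rw [h1, h2, Finset.sum_const, smul_eq_mul, hcl]
            rw [mul_comm (f x) (centCard x), ← mul_assoc, class_mul_cent x]
          · simp [hx]
    _ = ∑ g : G, ∑ x : G, if IsConj g x ∧ x ∈ H then f g * centCard g else 0 :=
          Finset.sum_comm
    _ = ∑ g : G, f g * centCard g * (univ.filter fun x : G => IsConj g x ∧ x ∈ H).card := by
          refine Finset.sum_congr rfl fun g _ => ?_
          rw [Finset.card_filter, Finset.mul_sum]
          refine Finset.sum_congr rfl fun x _ => ?_
          split <;> simp


private noncomputable def fK (K : Subgroup G) (x : G) : ℕ :=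
  (univ.filter fun g : G => g * x * g⁻¹ ∈ K).card

private lemma fK_classfun (K : Subgroup G) (u x : G) : fK K (u * x * u⁻¹) = fK K x := by
  unfold fK
  apply Finset.card_bij' (fun g _ => g * u) (fun g _ => g * u⁻¹)
  · intro g hg
    simp only [mem_filter, mem_univ, true_and] at hg ⊢
    have he : (g * u) * x * (g * u)⁻¹ = g * (u * x * u⁻¹) * g⁻¹ := by group
    rw [he]; exact hg
  · intro g hg
    simp only [mem_filter, mem_univ, true_and] at hg ⊢
    have he : (g * u⁻¹) * (u * x * u⁻¹) * (g * u⁻¹)⁻¹ = g * x * g⁻¹ := by group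
    rw [he]; exact hg
  · intros; simp
  · intros; simp

private noncomputable def nKH (K H : Subgroup G) : ℕ :=
  ∑ k : ↥K, (univ.filter fun g : G => g⁻¹ * k * g ∈ H).card

private lemma nKH_eq (K H : Subgroup G) :
    nKH K H = ∑ x ∈ univ.filter (fun x : G => x ∈ H), fK K x := by
  unfold nKH
  calc
    ∑ k : ↥K, (univ.filter fun g : G => g⁻¹ * k * g ∈ H).card
        = ∑ k : ↥K, ∑ g : G, if g⁻¹ * (k : G) * g ∈ H then 1 else 0 := by
          refine Finset.sum_congr rfl fun k _ => ?_; rw [Finset.card_filter]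
    _ = ∑ g : G, ∑ k : ↥K, if g⁻¹ * (k : G) * g ∈ H then 1 else 0 := Finset.sum_comm
    _ = ∑ g : G, (univ.filter fun k : ↥K => g⁻¹ * (k : G) * g ∈ H).card := by
          refine Finset.sum_congr rfl fun g _ => ?_; rw [Finset.card_filter]
    _ = ∑ g : G, (univ.filter fun x : G => x ∈ H ∧ g * x * g⁻¹ ∈ K).card := by
          refine Finset.sum_congr rfl fun g _ => ?_
          apply Finset.card_bij'
            (s := univ.filter fun k : ↥K => g⁻¹ * (k : G) * g ∈ H)
            (t := univ.filter fun x : G => x ∈ H ∧ g * x * g⁻¹ ∈ K)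
            (fun k _ => g⁻¹ * (k : G) * g)
            (fun x hx => (⟨g * x * g⁻¹,
              ((Finset.mem_filter.1 hx).2).2⟩ : ↥K))
          case hi =>
            intro k hk
            simp only [mem_filter, mem_univ, true_and] at hk ⊢
            refine ⟨hk, ?_⟩
            have he : g * (g⁻¹ * (k : G) * g) * g⁻¹ = (k : G) := by group
            rw [he]; exact k.2
          case hj =>
            intro x hx
            simp only [mem_filter, mem_univ, true_and] at hx ⊢
            have he : g⁻¹ * (g * x * g⁻¹) * g = x := by group
            rw [he]; exact hx.1
          case left_inv =>
            intro k hk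
            apply Subtype.ext
            simp [mul_assoc]
          case right_inv =>
            intro x hx
            simp [mul_assoc]
    _ = ∑ g : G, ∑ x : G, if x ∈ H ∧ g * x * g⁻¹ ∈ K then 1 else 0 := by
          refine Finset.sum_congr rfl fun g _ => ?_; rw [Finset.card_filter]
    _ = ∑ x : G, ∑ g : G, if x ∈ H ∧ g * x * g⁻¹ ∈ K then 1 else 0 := Finset.sum_comm
    _ = ∑ x : G, if x ∈ H then (univ.filter fun g : G => g * x * g⁻¹ ∈ K).card else 0 := by
          refine Finset.sum_congr rfl fun x _ => ?_
          by_cases hx : x ∈ H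
          · simp only [hx, true_and, if_true, Finset.card_filter]
          · simp [hx]
    _ = ∑ x ∈ univ.filter (fun x : G => x ∈ H), fK K x := by
          rw [Finset.sum_filter]; rfl

private lemma nKH_indep (K H₁ H₂ : Subgroup G)
    (hgass : ∀ g : G,
      Set.ncard ({x | IsConj g x} ∩ (H₁ : Set G)) =
        Set.ncard ({x | IsConj g x} ∩ (H₂ : Set G))) :
    nKH K H₁ = nKH K H₂ := by
  have hconv : ∀ (H : Subgroup G) (g : G),
      Set.ncard ({x | IsConj g x} ∩ (H : Set G)) =
        (univ.filter fun x : G => IsConj g x ∧ x ∈ H).card := by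
    intro H g
    rw [show ({x | IsConj g x} ∩ (H : Set G)) =
        ((univ.filter fun x : G => IsConj g x ∧ x ∈ H : Finset G) : Set G) by
      ext x; simp [Set.mem_setOf_eq, SetLike.mem_coe]]
    exact Set.ncard_coe_finset _
  have key : Fintype.card G * nKH K H₁ = Fintype.card G * nKH K H₂ := by
    rw [nKH_eq K H₁, nKH_eq K H₂,
      class_fun_sum H₁ (fK K) (fun u x => fK_classfun K u x),
      class_fun_sum H₂ (fK K) (fun u x => fK_classfun K u x)]
    refine Finset.sum_congr rfl fun g _ => ?_
    rw [← hconv, ← hconv, hgass g]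
  exact Nat.eq_of_mul_eq_mul_left Fintype.card_pos key


private def dosetMulAction (K H : Subgroup G) : MulAction (↥K × ↥H) G where
  smul p g := (p.1 : G) * g * ((p.2 : ↥H) : G)⁻¹
  one_smul g := by
    show ((1 : ↥K) : G) * g * ((1 : ↥H) : G)⁻¹ = g
    simp
  mul_smul p q g := by
    show ((p.1 * q.1 : ↥K) : G) * g * ((p.2 * q.2 : ↥H) : G)⁻¹
      = (p.1 : G) * ((q.1 : G) * g * ((q.2 : ↥H) : G)⁻¹) * ((p.2 : ↥H) : G)⁻¹
    push_cast
    group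

private lemma sum_subtype_ite (H : Subgroup G) (v : G) :
    (∑ h : ↥H, if v = ↑h then 1 else 0) = if v ∈ H then 1 else 0 := by
  by_cases hv : v ∈ H
  · rw [if_pos hv, Finset.sum_eq_single (⟨v, hv⟩ : ↥H)]
    · simp
    · intro b _ hb
      rw [if_neg]
      intro he
      exact hb (Subtype.ext he.symm)
    · simp
  · rw [if_neg hv]
    apply Finset.sum_eq_zero
    intro h _
    rw [if_neg]
    intro he
    exact hv (he ▸ h.2)

private lemma burnside_doset (K H : Subgroup G) :
    Nat.card (DoubleCoset.Quotient (K : Set G) (H : Set G)) * (Nat.card ↥K * Nat.card ↥H)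
      = nKH K H := by
  letI := dosetMulAction K H
  haveI : Finite (MulAction.orbitRel.Quotient (↥K × ↥H) G) := Quotient.finite _
  haveI : Fintype (MulAction.orbitRel.Quotient (↥K × ↥H) G) := Fintype.ofFinite _
  have burn := MulAction.sum_card_fixedBy_eq_card_orbits_mul_card_group (↥K × ↥H) G
  have hL : (∑ a : ↥K × ↥H, Fintype.card (MulAction.fixedBy G a)) = nKH K H := by
    have h1 : ∀ a : ↥K × ↥H, Fintype.card (MulAction.fixedBy G a)
        = (univ.filter fun g : G => g⁻¹ * (a.1 : G) * g = ((a.2 : ↥H) : G)).card := by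
      intro a
      rw [← Fintype.card_subtype]
      apply Fintype.card_congr
      apply Equiv.subtypeEquivRight
      intro g
      show (a.1 : G) * g * ((a.2 : ↥H) : G)⁻¹ = g ↔ g⁻¹ * (a.1 : G) * g = ((a.2 : ↥H) : G)
      constructor
      · intro h
        have h2 : (a.1 : G) * g = g * ((a.2 : ↥H) : G) := by
          rw [mul_inv_eq_iff_eq_mul] at h
          exact h
        calc g⁻¹ * (a.1 : G) * g = g⁻¹ * ((a.1 : G) * g) := by rw [mul_assoc]
          _ = g⁻¹ * (g * ((a.2 : ↥H) : G)) := by rw [h2]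
          _ = ((a.2 : ↥H) : G) := by group
      · intro h
        rw [← h]
        group
    calc ∑ a : ↥K × ↥H, Fintype.card (MulAction.fixedBy G a)
        = ∑ k : ↥K, ∑ h : ↥H,
            (univ.filter fun g : G => g⁻¹ * (k : G) * g = (h : G)).card := by
          rw [Fintype.sum_prod_type]
          exact Finset.sum_congr rfl fun k _ =>
            Finset.sum_congr rfl fun h _ => h1 (k, h)
      _ = ∑ k : ↥K, ∑ h : ↥H, ∑ g : G,
            if g⁻¹ * (k : G) * g = (h : G) then 1 else 0 := by
          refine Finset.sum_congr rfl fun k _ => Finset.sum_congr rfl fun h _ => ?_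
          rw [Finset.card_filter]
      _ = ∑ k : ↥K, ∑ g : G, ∑ h : ↥H,
            if g⁻¹ * (k : G) * g = (h : G) then 1 else 0 := by
          exact Finset.sum_congr rfl fun k _ => Finset.sum_comm
      _ = ∑ k : ↥K, ∑ g : G, if g⁻¹ * (k : G) * g ∈ H then 1 else 0 := by
          refine Finset.sum_congr rfl fun k _ => Finset.sum_congr rfl fun g _ => ?_
          exact sum_subtype_ite H _
      _ = nKH K H := by
          unfold nKH
          exact Finset.sum_congr rfl fun k _ => (Finset.card_filter _ _).symm
  have e : MulAction.orbitRel.Quotient (↥K × ↥H) G ≃ DoubleCoset.Quotient (K : Set G) (H : Set G) := by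
    apply Quotient.congrRight
    intro a b
    rw [MulAction.orbitRel_apply, MulAction.mem_orbit_iff]
    rw [DoubleCoset.rel_iff]
    constructor
    · rintro ⟨⟨k, h⟩, hk⟩
      refine ⟨(k : G)⁻¹, K.inv_mem k.2, (h : G), h.2, ?_⟩
      have : (k : G) * b * ((h : ↥H) : G)⁻¹ = a := hk
      rw [← this]; group
    · rintro ⟨x, hx, y, hy, rfl⟩
      refine ⟨⟨⟨x⁻¹, K.inv_mem hx⟩, ⟨y, hy⟩⟩, ?_⟩
      show x⁻¹ * (x * a * y) * y⁻¹ = a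
      group
  rw [hL] at burn
  have hq : Nat.card (DoubleCoset.Quotient (K : Set G) (H : Set G))
      = Fintype.card (_root_.Quotient (MulAction.orbitRel (↥K × ↥H) G)) := by
    rw [← Nat.card_eq_fintype_card]
    exact Nat.card_congr e.symm
  calc Nat.card (DoubleCoset.Quotient (K : Set G) (H : Set G)) * (Nat.card ↥K * Nat.card ↥H)
      = Fintype.card (_root_.Quotient (MulAction.orbitRel (↥K × ↥H) G))
          * Fintype.card (↥K × ↥H) := by
        rw [hq, Fintype.card_prod, Nat.card_eq_fintype_card, Nat.card_eq_fintype_card]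
    _ = nKH K H := burn.symm

private lemma nKH_pos_card (H : Subgroup G) : 0 < Nat.card ↥H :=
  Nat.card_pos

lemma gassmann_card_eq (H₁ H₂ : Subgroup G)
    (hgass : ∀ g : G,
      Set.ncard ({x | IsConj g x} ∩ (H₁ : Set G)) =
        Set.ncard ({x | IsConj g x} ∩ (H₂ : Set G))) :
    Nat.card ↥H₁ = Nat.card ↥H₂ := by
  have h1 := nKH_indep ⊤ H₁ H₂ hgass
  rw [nKH_eq, nKH_eq] at h1
  have hfk : ∀ x : G, fK (⊤ : Subgroup G) x = Fintype.card G := by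
    intro x
    unfold fK
    simp
  rw [Finset.sum_congr rfl fun x _ => hfk x, Finset.sum_congr rfl fun x _ => hfk x,
    Finset.sum_const, Finset.sum_const, smul_eq_mul, smul_eq_mul] at h1
  have h2 := Nat.eq_of_mul_eq_mul_right Fintype.card_pos h1
  have hfilt : ∀ H : Subgroup G,
      Nat.card ↥H = (univ.filter fun x : G => x ∈ H).card := by
    intro H
    rw [Nat.card_eq_fintype_card, ← Fintype.card_subtype]
  rw [hfilt, hfilt, h2]

lemma gassmann_doset_card (K H₁ H₂ : Subgroup G)
    (hgass : ∀ g : G,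
      Set.ncard ({x | IsConj g x} ∩ (H₁ : Set G)) =
        Set.ncard ({x | IsConj g x} ∩ (H₂ : Set G))) :
    Nat.card (DoubleCoset.Quotient (K : Set G) (H₁ : Set G))
      = Nat.card (DoubleCoset.Quotient (K : Set G) (H₂ : Set G)) := by
  have hb1 := burnside_doset K H₁
  have hb2 := burnside_doset K H₂
  have hH : Nat.card ↥H₁ = Nat.card ↥H₂ := gassmann_card_eq H₁ H₂ hgass
  have hn := nKH_indep K H₁ H₂ hgass
  rw [hH] at hb1
  rw [← hb2] at hn
  rw [← hb1] at hn
  have hpos : 0 < Nat.card ↥K * Nat.card ↥H₂ :=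
    Nat.mul_pos Nat.card_pos Nat.card_pos
  exact Nat.eq_of_mul_eq_mul_right hpos hn

end PartA


section Abstract
open scoped Classical

private lemma gcd_expand {m e : ℕ} (hm : 1 ≤ m) (he : 1 ≤ e) :
    Nat.gcd m e = ∑ d ∈ m.divisors, if d ∣ e then Nat.totient d else 0 := by
  have hdiv : (Nat.gcd m e).divisors = m.divisors.filter (· ∣ e) := by
    ext d
    simp only [Nat.mem_divisors, Finset.mem_filter]
    constructor
    · rintro ⟨hd, _⟩
      obtain ⟨h1, h2⟩ := Nat.dvd_gcd_iff.1 hd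
      exact ⟨⟨h1, by omega⟩, h2⟩
    · rintro ⟨⟨h1, _⟩, h2⟩
      refine ⟨Nat.dvd_gcd h1 h2, ?_⟩
      have hgz : Nat.gcd m e = 0 ↔ m = 0 ∧ e = 0 := Nat.gcd_eq_zero_iff
      omega
  rw [← Nat.sum_totient (Nat.gcd m e), hdiv, Finset.sum_filter]

private lemma sum_gcd_eq (α : Type*) [Fintype α] (E : α → ℕ) (hE : ∀ a, 1 ≤ E a)
    {m : ℕ} (hm : 1 ≤ m) :
    ∑ a : α, Nat.gcd m (E a)
      = ∑ d ∈ m.divisors, Nat.totient d * (univ.filter fun a => d ∣ E a).card := by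
  calc ∑ a : α, Nat.gcd m (E a)
      = ∑ a : α, ∑ d ∈ m.divisors, if d ∣ E a then Nat.totient d else 0 :=
        Finset.sum_congr rfl fun a _ => gcd_expand hm (hE a)
    _ = ∑ d ∈ m.divisors, ∑ a : α, if d ∣ E a then Nat.totient d else 0 := Finset.sum_comm
    _ = ∑ d ∈ m.divisors, Nat.totient d * (univ.filter fun a => d ∣ E a).card := by
        refine Finset.sum_congr rfl fun d _ => ?_
        rw [Finset.card_filter, Finset.mul_sum]
        refine Finset.sum_congr rfl fun a _ => ?_
        split <;> simp

private lemma count_decomp {γ : Type*} [Fintype γ] (E : γ → ℕ) (B k : ℕ)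
    (hp : ∀ x, 1 ≤ E x) (hB : ∀ x, E x ≤ B) :
    (univ.filter fun x => k ∣ E x).card
      = ∑ j' ∈ ((Finset.Icc 1 B).filter (k ∣ ·)),
          (univ.filter fun x => E x = j').card := by
  rw [Finset.card_eq_sum_card_fiberwise (f := E)
    (t := (Finset.Icc 1 B).filter (k ∣ ·)) (fun x hx => by
      simp only [Finset.mem_coe, Finset.mem_filter, Finset.mem_univ, true_and] at hx
      simp only [Finset.mem_coe, Finset.mem_filter, Finset.mem_Icc]
      exact ⟨⟨hp x, hB x⟩, hx⟩)]
  refine Finset.sum_congr rfl fun j' hj' => ?_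
  simp only [Finset.mem_filter, Finset.mem_Icc] at hj'
  congr 1
  rw [Finset.filter_filter]
  refine Finset.filter_congr fun x _ => ?_
  constructor
  · rintro ⟨_, h⟩; exact h
  · intro h; exact ⟨by rw [h]; exact hj'.2, h⟩

private lemma gcd_sum_determines {α β : Type*} [Fintype α] [Fintype β]
    (E₁ : α → ℕ) (E₂ : β → ℕ) (B : ℕ)
    (h₁pos : ∀ a, 1 ≤ E₁ a) (h₂pos : ∀ b, 1 ≤ E₂ b)
    (h₁B : ∀ a, E₁ a ≤ B) (h₂B : ∀ b, E₂ b ≤ B)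
    (hsum : ∀ m : ℕ, 1 ≤ m → ∑ a : α, Nat.gcd m (E₁ a) = ∑ b : β, Nat.gcd m (E₂ b)) :
    ∀ k : ℕ, (univ.filter fun a => E₁ a = k).card = (univ.filter fun b => E₂ b = k).card := by
  -- Step 1: divisor counts agree
  have step1 : ∀ m : ℕ, 1 ≤ m →
      (univ.filter fun a => m ∣ E₁ a).card = (univ.filter fun b => m ∣ E₂ b).card := by
    intro m
    induction m using Nat.strong_induction_on with
    | _ m IH =>
      intro hm
      have hkey := hsum m hm
      rw [sum_gcd_eq α E₁ h₁pos hm, sum_gcd_eq β E₂ h₂pos hm] at hkey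
      have hmem : m ∈ m.divisors := Nat.mem_divisors_self m (by omega)
      rw [← Finset.add_sum_erase _ _ hmem, ← Finset.add_sum_erase _ _ hmem] at hkey
      have herase : ∑ d ∈ m.divisors.erase m,
            Nat.totient d * (univ.filter fun a => d ∣ E₁ a).card
          = ∑ d ∈ m.divisors.erase m,
            Nat.totient d * (univ.filter fun b => d ∣ E₂ b).card := by
        refine Finset.sum_congr rfl fun d hd => ?_
        rw [Finset.mem_erase, Nat.mem_divisors] at hd
        obtain ⟨hne, hdvd, _⟩ := hd
        have hdlt : d < m := Nat.lt_of_le_of_ne (Nat.le_of_dvd (by omega) hdvd) hne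
        have hd1 : 1 ≤ d := by
          rcases Nat.eq_zero_or_pos d with h | h
          · subst h; simp at hdvd; omega
          · exact h
        rw [IH d hdlt hd1]
      rw [herase] at hkey
      have := Nat.add_right_cancel hkey
      exact Nat.eq_of_mul_eq_mul_left (Nat.totient_pos.2 (by omega)) this
  -- Step 2: downward induction for exact counts
  have step2 : ∀ j : ℕ, ∀ k : ℕ, 1 ≤ k → B + 1 - k ≤ j →
      (univ.filter fun a => E₁ a = k).card = (univ.filter fun b => E₂ b = k).card := by
    intro j
    induction j using Nat.strong_induction_on with
    | _ j IH =>
      intro k hk1 hkj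
      by_cases hkB : B < k
      · have e1 : (univ.filter fun a => E₁ a = k) = ∅ :=
          Finset.filter_false_of_mem (fun a _ ha => absurd (ha ▸ h₁B a) (by omega))
        have e2 : (univ.filter fun b => E₂ b = k) = ∅ :=
          Finset.filter_false_of_mem (fun b _ hb => absurd (hb ▸ h₂B b) (by omega))
        rw [e1, e2, Finset.card_empty, Finset.card_empty]
      push_neg at hkB
      -- decomposition of divisor count into exact counts
      have hT : k ∈ (Finset.Icc 1 B).filter (k ∣ ·) := by
        simp only [Finset.mem_filter, Finset.mem_Icc]
        exact ⟨⟨hk1, hkB⟩, dvd_refl k⟩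
      have h1 := count_decomp E₁ B k h₁pos h₁B
      have h2 := count_decomp E₂ B k h₂pos h₂B
      rw [← Finset.add_sum_erase _ _ hT] at h1 h2
      have herase : ∑ j' ∈ (((Finset.Icc 1 B).filter (k ∣ ·)).erase k),
            (univ.filter fun a => E₁ a = j').card
          = ∑ j' ∈ (((Finset.Icc 1 B).filter (k ∣ ·)).erase k),
            (univ.filter fun b => E₂ b = j').card := by
        refine Finset.sum_congr rfl fun j' hj' => ?_
        rw [Finset.mem_erase, Finset.mem_filter, Finset.mem_Icc] at hj'
        obtain ⟨hne, ⟨hj1, hjB⟩, hkdvd⟩ := hj'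
        have hkj' : k < j' := Nat.lt_of_le_of_ne (Nat.le_of_dvd (by omega) hkdvd) (Ne.symm hne)
        exact IH (B + 1 - j') (by omega) j' hj1 (by omega)
      have hBc := step1 k hk1
      rw [h1, h2, herase] at hBc
      exact Nat.add_right_cancel hBc
  intro k
  rcases Nat.eq_zero_or_pos k with rfl | hk
  · have e1 : (univ.filter fun a => E₁ a = 0) = ∅ :=
      Finset.filter_false_of_mem (fun a _ ha => absurd (ha ▸ h₁pos a) (by omega))
    have e2 : (univ.filter fun b => E₂ b = 0) = ∅ :=
      Finset.filter_false_of_mem (fun b _ hb => absurd (hb ▸ h₂pos b) (by omega))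
    rw [e1, e2, Finset.card_empty, Finset.card_empty]
  · exact step2 (B + 1 - k) k hk le_rfl

end Abstract


section PartB
variable {G : Type*} [Group G]

open scoped Classical

/-- characterization of the join `⟨c^m⟩ ⊔ I` when `c` normalizes `I` -/
private lemma mem_join_zpow (I : Subgroup G) (c : G) (m : ℕ)
    (hcn : ∀ n : ℤ, ∀ i ∈ I, c ^ n * i * (c ^ n)⁻¹ ∈ I) (x : G) :
    x ∈ Subgroup.zpowers (c ^ m) ⊔ I ↔ ∃ n : ℤ, ∃ i ∈ I, x = c ^ ((m : ℤ) * n) * i := by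
  have hSS : ∃ SS : Subgroup G, (SS : Set G) = {x | ∃ n : ℤ, ∃ i ∈ I, x = c ^ ((m:ℤ) * n) * i} := by
    refine ⟨⟨⟨⟨{x | ∃ n : ℤ, ∃ i ∈ I, x = c ^ ((m:ℤ) * n) * i}, ?_⟩, ?_⟩, ?_⟩, rfl⟩
    · rintro x y ⟨a, i, hi, rfl⟩ ⟨b, j, hj, rfl⟩
      refine ⟨a + b, (c ^ (-((m:ℤ) * b)) * i * (c ^ (-((m:ℤ) * b)))⁻¹) * j,
        I.mul_mem (hcn _ i hi) hj, ?_⟩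
      group
    · exact ⟨0, 1, I.one_mem, by simp⟩
    · rintro x ⟨a, i, hi, rfl⟩
      refine ⟨-a, c ^ ((m:ℤ) * a) * i⁻¹ * (c ^ ((m:ℤ) * a))⁻¹, hcn _ _ (I.inv_mem hi), ?_⟩
      group
  obtain ⟨SS, hSS⟩ := hSS
  have hmem : ∀ y : G, y ∈ SS ↔ ∃ n : ℤ, ∃ i ∈ I, y = c ^ ((m:ℤ) * n) * i := by
    intro y
    rw [← SetLike.mem_coe, hSS]
    rfl
  have heq : Subgroup.zpowers (c ^ m) ⊔ I = SS := by
    apply le_antisymm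
    · apply sup_le
      · rw [Subgroup.zpowers_le, hmem]
        exact ⟨1, 1, I.one_mem, by
          rw [mul_one, mul_one, zpow_natCast]⟩
      · intro i hi
        rw [hmem]
        exact ⟨0, i, hi, by simp⟩
    · intro x hx
      rw [hmem] at hx
      obtain ⟨n, i, hi, rfl⟩ := hx
      refine Subgroup.mul_mem _ (Subgroup.mem_sup_left ?_) (Subgroup.mem_sup_right hi)
      refine ⟨n, ?_⟩
      show (c ^ m) ^ n = c ^ ((m:ℤ) * n)
      rw [← zpow_natCast c m, ← zpow_mul]
  rw [heq, hmem]

/-- characterization of membership in `D` -/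
private lemma mem_D_iff (D I : Subgroup G) (c : G) (hID : I ≤ D) (hc : c ∈ D)
    (hCI : ∀ d ∈ D, ∃ m : ℤ, ∃ i ∈ I, d = c ^ m * i) (x : G) :
    x ∈ D ↔ ∃ n : ℤ, ∃ i ∈ I, x = c ^ n * i := by
  constructor
  · exact hCI x
  · rintro ⟨n, i, hi, rfl⟩
    exact D.mul_mem (D.zpow_mem hc n) (hID hi)

variable (I H : Subgroup G) (c : G)

/-- the action of `c^n` on `I\G/H` -/
private def actQ (hcn : ∀ n : ℤ, ∀ i ∈ I, c ^ n * i * (c ^ n)⁻¹ ∈ I) (n : ℤ) :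
    DoubleCoset.Quotient (I : Set G) (H : Set G) → DoubleCoset.Quotient (I : Set G) (H : Set G) :=
  Quotient.map' (fun g => c ^ n * g) (by
    intro a b hab
    rw [DoubleCoset.rel_iff] at hab ⊢
    obtain ⟨i, hi, h, hh, rfl⟩ := hab
    exact ⟨c ^ n * i * (c ^ n)⁻¹, hcn n i hi, h, hh, by group⟩)

variable (hcn : ∀ n : ℤ, ∀ i ∈ I, c ^ n * i * (c ^ n)⁻¹ ∈ I)

private lemma actQ_mk (n : ℤ) (g : G) :
    actQ I H c hcn n (DoubleCoset.mk I H g) = DoubleCoset.mk I H (c ^ n * g) := rfl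

private lemma actQ_add (a b : ℤ) (x : DoubleCoset.Quotient (I : Set G) (H : Set G)) :
    actQ I H c hcn (a + b) x = actQ I H c hcn a (actQ I H c hcn b x) := by
  induction x using Quotient.inductionOn' with
  | h g => rw [show (Quotient.mk'' g : DoubleCoset.Quotient (I : Set G) (H : Set G))
      = DoubleCoset.mk I H g from rfl, actQ_mk, actQ_mk, actQ_mk, zpow_add, mul_assoc]

private lemma actQ_zero (x : DoubleCoset.Quotient (I : Set G) (H : Set G)) :
    actQ I H c hcn 0 x = x := by
  induction x using Quotient.inductionOn' with
  | h g => rw [show (Quotient.mk'' g : DoubleCoset.Quotient (I : Set G) (H : Set G))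
      = DoubleCoset.mk I H g from rfl, actQ_mk, zpow_zero, one_mul]

private lemma actQ_cancel (n : ℤ) {x y : DoubleCoset.Quotient (I : Set G) (H : Set G)}
    (hxy : actQ I H c hcn n x = actQ I H c hcn n y) : x = y := by
  have := congrArg (actQ I H c hcn (-n)) hxy
  rwa [← actQ_add, ← actQ_add, neg_add_cancel, actQ_zero, actQ_zero] at this

/-- key: equality in `(⟨c^m⟩ ⊔ I)\G/H` corresponds to the `c^m`-orbit relation on `I\G/H` -/
private lemma mk_join_eq_iff (m : ℕ) (g g' : G) :
    DoubleCoset.mk (Subgroup.zpowers (c ^ m) ⊔ I) H g = DoubleCoset.mk (Subgroup.zpowers (c ^ m) ⊔ I) H g'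
      ↔ ∃ n : ℤ, actQ I H c hcn ((m : ℤ) * n) (DoubleCoset.mk I H g) = DoubleCoset.mk I H g' := by
  rw [DoubleCoset.eq]
  constructor
  · rintro ⟨κ, hκ, h, hh, rfl⟩
    obtain ⟨n, i, hi, rfl⟩ := (mem_join_zpow I c m hcn κ).1 hκ
    refine ⟨n, ?_⟩
    rw [actQ_mk, DoubleCoset.eq]
    exact ⟨c ^ ((m:ℤ) * n) * i * (c ^ ((m:ℤ) * n))⁻¹, hcn _ i hi, h, hh, by group⟩
  · rintro ⟨n, hn⟩
    rw [actQ_mk, DoubleCoset.eq] at hn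
    obtain ⟨i, hi, h, hh, rfl⟩ := hn
    refine ⟨i * c ^ ((m:ℤ) * n), Subgroup.mul_mem _ (Subgroup.mem_sup_right hi)
      ((mem_join_zpow I c m hcn _).2 ⟨n, 1, I.one_mem, by rw [mul_one]⟩), h, hh, by group⟩

/-- key for `D` itself -/
private lemma mk_D_eq_iff (D : Subgroup G) (hID : I ≤ D) (hc : c ∈ D)
    (hCI : ∀ d ∈ D, ∃ m : ℤ, ∃ i ∈ I, d = c ^ m * i) (g g' : G) :
    DoubleCoset.mk D H g = DoubleCoset.mk D H g'
      ↔ ∃ n : ℤ, actQ I H c hcn n (DoubleCoset.mk I H g) = DoubleCoset.mk I H g' := by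
  rw [DoubleCoset.eq]
  constructor
  · rintro ⟨κ, hκ, h, hh, rfl⟩
    obtain ⟨n, i, hi, rfl⟩ := (mem_D_iff D I c hID hc hCI κ).1 hκ
    refine ⟨n, ?_⟩
    rw [actQ_mk, DoubleCoset.eq]
    exact ⟨c ^ n * i * (c ^ n)⁻¹, hcn _ i hi, h, hh, by group⟩
  · rintro ⟨n, hn⟩
    rw [actQ_mk, DoubleCoset.eq] at hn
    obtain ⟨i, hi, h, hh, rfl⟩ := hn
    exact ⟨i * c ^ n, D.mul_mem (hID hi) (D.zpow_mem hc n), h, hh, by group⟩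


private lemma actQ_iterate (n : ℕ) (x : DoubleCoset.Quotient (I : Set G) (H : Set G)) :
    (actQ I H c hcn 1)^[n] x = actQ I H c hcn (n : ℤ) x := by
  induction n with
  | zero => rw [Function.iterate_zero_apply, Nat.cast_zero, actQ_zero]
  | succ k ih =>
    rw [Function.iterate_succ_apply', ih, ← actQ_add]
    congr 1
    push_cast
    ring

private noncomputable def perQ (x : DoubleCoset.Quotient (I : Set G) (H : Set G)) : ℕ :=
  Function.minimalPeriod (actQ I H c hcn 1) x

variable [Fintype G]

private lemma perQ_pos (x : DoubleCoset.Quotient (I : Set G) (H : Set G)) :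
    0 < perQ I H c hcn x := by
  apply Function.minimalPeriod_pos_of_mem_periodicPts
  rw [Function.mem_periodicPts]
  haveI : Finite (DoubleCoset.Quotient (I : Set G) (H : Set G)) := Quotient.finite _
  obtain ⟨a, b, hab, heq⟩ :=
    Finite.exists_ne_map_eq_of_infinite (fun n : ℕ => actQ I H c hcn (n : ℤ) x)
  have key : ∀ a b : ℕ, a < b → actQ I H c hcn (a : ℤ) x = actQ I H c hcn (b : ℤ) x →
      ∃ n > 0, Function.IsPeriodicPt (actQ I H c hcn 1) n x := by
    intro a b hlt he
    refine ⟨b - a, by omega, ?_⟩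
    have hb : (b : ℤ) = ((b - a : ℕ) : ℤ) + (a : ℤ) := by
      push_cast
      omega
    rw [hb, actQ_add] at he
    have := actQ_cancel I H c hcn (a : ℤ) (x := x)
      (y := actQ I H c hcn ((b - a : ℕ) : ℤ) x) ?_
    · unfold Function.IsPeriodicPt Function.IsFixedPt
      rw [actQ_iterate]
      exact this.symm
    · -- actQ a x = actQ a (actQ (b-a) x)  ... commuted
      have hcomm : actQ I H c hcn ((b - a : ℕ) : ℤ) (actQ I H c hcn (a:ℤ) x)
          = actQ I H c hcn (a:ℤ) (actQ I H c hcn ((b - a : ℕ) : ℤ) x) := by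
        rw [← actQ_add, ← actQ_add, add_comm]
      rw [hcomm] at he
      exact he
  rcases lt_or_gt_of_ne hab with h | h
  · exact key a b h heq
  · exact key b a h heq.symm

private lemma actQ_eq_self_iff (x : DoubleCoset.Quotient (I : Set G) (H : Set G)) (k : ℤ) :
    actQ I H c hcn k x = x ↔ ((perQ I H c hcn x : ℤ)) ∣ k := by
  set p := perQ I H c hcn x with hp
  have hp0 : 0 < p := perQ_pos I H c hcn x
  have hper : actQ I H c hcn (p : ℤ) x = x := by
    rw [← actQ_iterate]
    exact Function.iterate_minimalPeriod
  have hperneg : actQ I H c hcn (-(p:ℤ)) x = x := by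
    apply actQ_cancel I H c hcn ((p:ℤ))
    rw [← actQ_add, add_neg_cancel, actQ_zero, hper]
  have hmul : ∀ t : ℤ, actQ I H c hcn ((p:ℤ) * t) x = x := by
    intro t
    induction t using Int.induction_on with
    | zero => rw [mul_zero, actQ_zero]
    | succ k ih =>
      rw [mul_add, mul_one, actQ_add, hper, ih]
    | pred k ih =>
      rw [mul_sub, mul_one, sub_eq_add_neg, actQ_add, hperneg, ih]
  constructor
  · intro hk
    have hr : actQ I H c hcn (k % (p:ℤ)) x = x := by
      have hrw : k % (p:ℤ) = -((p:ℤ) * (k / (p:ℤ))) + k := by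
        have := Int.mul_ediv_add_emod k (p:ℤ)
        omega
      rw [hrw, actQ_add, hk]
      have : -((p:ℤ) * (k / (p:ℤ))) = (p:ℤ) * (-(k / (p:ℤ))) := by ring
      rw [this, hmul]
    have hr0 : 0 ≤ k % (p:ℤ) := Int.emod_nonneg k (by exact_mod_cast hp0.ne')
    have hrp : k % (p:ℤ) < (p:ℤ) := Int.emod_lt_of_pos k (by exact_mod_cast hp0)
    rcases eq_or_lt_of_le hr0 with h0 | h0
    · exact Int.dvd_of_emod_eq_zero h0.symm
    · exfalso
      have hip : Function.IsPeriodicPt (actQ I H c hcn 1) (k % (p:ℤ)).toNat x := by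
        unfold Function.IsPeriodicPt Function.IsFixedPt
        rw [actQ_iterate, Int.toNat_of_nonneg hr0]
        exact hr
      have hle := Function.IsPeriodicPt.minimalPeriod_le (by omega) hip
      have hle' : p ≤ (k % (p:ℤ)).toNat := hle
      omega
  · rintro ⟨t, rfl⟩
    exact hmul t

private lemma actQ_eq_actQ_iff (x : DoubleCoset.Quotient (I : Set G) (H : Set G)) (a b : ℤ) :
    actQ I H c hcn a x = actQ I H c hcn b x ↔ ((perQ I H c hcn x : ℤ)) ∣ (a - b) := by
  constructor
  · intro h
    have := congrArg (actQ I H c hcn (-b)) h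
    rw [← actQ_add, ← actQ_add, neg_add_cancel, actQ_zero] at this
    have h3 := (actQ_eq_self_iff I H c hcn x (-b + a)).1 this
    rwa [neg_add_eq_sub] at h3
  · intro h
    have h2 : actQ I H c hcn (a - b) x = x := by
      rw [actQ_eq_self_iff]
      exact h
    have : actQ I H c hcn (b + (a - b)) x = actQ I H c hcn b x := by
      rw [actQ_add, h2]
    rw [show b + (a - b) = a by ring] at this
    exact this

private lemma exists_dvd_iff_gcd_dvd (m e : ℕ) (a : ℤ) :
    (∃ t : ℤ, (e : ℤ) ∣ ((m : ℤ) * t + a)) ↔ ((Nat.gcd m e : ℤ) ∣ a) := by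
  constructor
  · rintro ⟨t, u, hu⟩
    have h1 : ((Nat.gcd m e : ℤ)) ∣ (m : ℤ) := Int.natCast_dvd_natCast.2 (Nat.gcd_dvd_left m e)
    have h2 : ((Nat.gcd m e : ℤ)) ∣ (e : ℤ) := Int.natCast_dvd_natCast.2 (Nat.gcd_dvd_right m e)
    have ha : a = (e : ℤ) * u - (m : ℤ) * t := by omega
    rw [ha]
    exact dvd_sub (h2.mul_right u) (h1.mul_right t)
  · rintro ⟨s, rfl⟩
    refine ⟨-(Nat.gcdA m e) * s, (Nat.gcdB m e) * s, ?_⟩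
    have hb := Nat.gcd_eq_gcd_ab m e
    calc (m:ℤ) * (-(Nat.gcdA m e) * s) + (Nat.gcd m e : ℤ) * s
        = ((Nat.gcd m e : ℤ) - (m:ℤ) * Nat.gcdA m e) * s := by ring
      _ = ((e:ℤ) * Nat.gcdB m e) * s := by rw [hb]; ring
      _ = (e:ℤ) * (Nat.gcdB m e * s) := by ring


/-- projection between double coset spaces for nested subgroups -/
private def projQ (J K : Subgroup G) (hJK : J ≤ K) :
    DoubleCoset.Quotient (J : Set G) (H : Set G) → DoubleCoset.Quotient (K : Set G) (H : Set G) :=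
  Quotient.map' id (by
    intro a b hab
    rw [DoubleCoset.rel_iff] at hab ⊢
    obtain ⟨i, hi, h, hh, rfl⟩ := hab
    exact ⟨i, hJK hi, h, hh, rfl⟩)

private lemma projQ_mk (J K : Subgroup G) (hJK : J ≤ K) (g : G) :
    projQ H J K hJK (DoubleCoset.mk J H g) = DoubleCoset.mk K H g := rfl

include hcn in
private lemma fiber_data (D : Subgroup G) (hID : I ≤ D) (hc : c ∈ D)
    (hCI : ∀ d ∈ D, ∃ m : ℤ, ∃ i ∈ I, d = c ^ m * i)
    (q : DoubleCoset.Quotient (D : Set G) (H : Set G)) :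
    0 < Nat.card {x : DoubleCoset.Quotient (I : Set G) (H : Set G) // projQ H I D hID x = q} ∧
    ∀ (m : ℕ) (hsup : Subgroup.zpowers (c ^ m) ⊔ I ≤ D),
      Nat.card {y : DoubleCoset.Quotient ((Subgroup.zpowers (c ^ m) ⊔ I : Subgroup G) : Set G)
          (H : Set G) // projQ H (Subgroup.zpowers (c ^ m) ⊔ I) D hsup y = q}
        = Nat.gcd m (Nat.card
            {x : DoubleCoset.Quotient (I : Set G) (H : Set G) // projQ H I D hID x = q}) := by
  set g₀ : G := Quotient.out q with hg₀
  have hq : DoubleCoset.mk D H g₀ = q := DoubleCoset.out_eq' D H q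
  set x₀ : DoubleCoset.Quotient (I : Set G) (H : Set G) := DoubleCoset.mk I H g₀ with hx₀
  set p : ℕ := perQ I H c hcn x₀ with hpdef
  have hp0 : 0 < p := perQ_pos I H c hcn x₀
  haveI : NeZero p := ⟨hp0.ne'⟩
  have hfibD : ∀ g : G, (DoubleCoset.mk D H g = q) ↔
      ∃ n : ℤ, DoubleCoset.mk I H (c ^ n * g₀) = DoubleCoset.mk I H g := by
    intro g
    rw [← hq]
    constructor
    · intro hgq
      obtain ⟨n, hn⟩ := (mk_D_eq_iff I H c hcn D hID hc hCI g₀ g).1 hgq.symm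
      exact ⟨n, by rw [← actQ_mk I H c hcn]; exact hn⟩
    · rintro ⟨n, hn⟩
      symm
      rw [mk_D_eq_iff I H c hcn D hID hc hCI g₀ g]
      exact ⟨n, by rw [actQ_mk]; exact hn⟩
  -- the I-fiber has cardinality p
  have hIcard : Nat.card {x : DoubleCoset.Quotient (I : Set G) (H : Set G)
      // projQ H I D hID x = q} = p := by
    have hbij : Function.Bijective (fun k : ZMod p =>
        (⟨DoubleCoset.mk I H (c ^ (k.val : ℤ) * g₀), (hfibD _).2 ⟨(k.val : ℤ), rfl⟩⟩ :
          {x : DoubleCoset.Quotient (I : Set G) (H : Set G) // projQ H I D hID x = q})) := by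
      constructor
      · intro a b hab
        have h1 : DoubleCoset.mk I H (c ^ (a.val : ℤ) * g₀) = DoubleCoset.mk I H (c ^ (b.val : ℤ) * g₀) :=
          congrArg Subtype.val hab
        rw [← actQ_mk I H c hcn, ← actQ_mk I H c hcn,
          actQ_eq_actQ_iff I H c hcn x₀ (a.val : ℤ) (b.val : ℤ)] at h1
        have hz : ((a.val : ℤ)) - (b.val : ℤ) = 0 := by
          apply Int.eq_zero_of_abs_lt_dvd h1
          have := ZMod.val_lt a
          have := ZMod.val_lt b
          rw [abs_lt]
          constructor <;> [skip; skip] <;> push_cast <;> omega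
        have : a.val = b.val := by omega
        exact ZMod.val_injective p this
      · rintro ⟨y, hy⟩
        obtain ⟨g, rfl⟩ : ∃ g : G, y = DoubleCoset.mk I H g :=
          ⟨Quotient.out y, (DoubleCoset.out_eq' I H y).symm⟩
        rw [projQ_mk] at hy
        obtain ⟨n, hn⟩ := (hfibD g).1 hy
        refine ⟨(n : ZMod p), ?_⟩
        apply Subtype.ext
        show DoubleCoset.mk I H (c ^ (((n : ZMod p).val : ℤ)) * g₀) = DoubleCoset.mk I H g
        rw [← hn]
        rw [← actQ_mk I H c hcn, ← actQ_mk I H c hcn]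
        rw [actQ_eq_actQ_iff I H c hcn x₀]
        rw [ZMod.val_intCast]
        rw [Int.emod_def]
        exact ⟨-(n / (p:ℤ)), by ring⟩
    rw [← Nat.card_eq_of_bijective _ hbij, Nat.card_zmod]
  refine ⟨by rw [hIcard]; exact hp0, ?_⟩
  intro m hsup
  rw [hIcard]
  set gd : ℕ := Nat.gcd m p with hgd
  have hgd0 : 0 < gd := Nat.gcd_pos_of_pos_right m hp0
  haveI : NeZero gd := ⟨hgd0.ne'⟩
  -- characterization of equality in the join quotient
  have hkey : ∀ a b : ℤ,
      DoubleCoset.mk (Subgroup.zpowers (c ^ m) ⊔ I) H (c ^ a * g₀)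
        = DoubleCoset.mk (Subgroup.zpowers (c ^ m) ⊔ I) H (c ^ b * g₀) ↔ (gd : ℤ) ∣ (a - b) := by
    intro a b
    rw [mk_join_eq_iff I H c hcn m]
    have h1 : ∀ n : ℤ, actQ I H c hcn ((m:ℤ) * n) (DoubleCoset.mk I H (c ^ a * g₀))
        = actQ I H c hcn ((m:ℤ) * n + a) x₀ := by
      intro n
      rw [← actQ_mk I H c hcn a g₀, ← actQ_add]
    have h2 : DoubleCoset.mk I H (c ^ b * g₀) = actQ I H c hcn b x₀ :=
      (actQ_mk I H c hcn b g₀).symm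
    constructor
    · rintro ⟨n, hn⟩
      rw [h1, h2, actQ_eq_actQ_iff I H c hcn x₀] at hn
      rw [← exists_dvd_iff_gcd_dvd m p (a - b)]
      exact ⟨n, by rw [show (m:ℤ) * n + (a - b) = (m:ℤ) * n + a - b by ring]; exact hn⟩
    · intro h
      rw [← exists_dvd_iff_gcd_dvd m p (a - b)] at h
      obtain ⟨n, hn⟩ := h
      refine ⟨n, ?_⟩
      rw [h1, h2, actQ_eq_actQ_iff I H c hcn x₀]
      rw [show (m:ℤ) * n + a - b = (m:ℤ) * n + (a - b) by ring]
      exact hn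
  have hbij : Function.Bijective (fun k : ZMod gd =>
      (⟨DoubleCoset.mk (Subgroup.zpowers (c ^ m) ⊔ I) H (c ^ (k.val : ℤ) * g₀), by
          rw [projQ_mk]; exact (hfibD _).2 ⟨(k.val : ℤ), rfl⟩⟩ :
        {y : DoubleCoset.Quotient ((Subgroup.zpowers (c ^ m) ⊔ I : Subgroup G) : Set G)
          (H : Set G) // projQ H (Subgroup.zpowers (c ^ m) ⊔ I) D hsup y = q})) := by
    constructor
    · intro a b hab
      have h1 := congrArg Subtype.val hab
      rw [hkey (a.val : ℤ) (b.val : ℤ)] at h1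
      have hz : ((a.val : ℤ)) - (b.val : ℤ) = 0 := by
        apply Int.eq_zero_of_abs_lt_dvd h1
        have := ZMod.val_lt a
        have := ZMod.val_lt b
        rw [abs_lt]
        constructor <;> push_cast <;> omega
      have : a.val = b.val := by omega
      exact ZMod.val_injective gd this
    · rintro ⟨y, hy⟩
      obtain ⟨g, rfl⟩ : ∃ g : G, y = DoubleCoset.mk (Subgroup.zpowers (c ^ m) ⊔ I) H g :=
        ⟨Quotient.out y, (DoubleCoset.out_eq' _ H y).symm⟩
      rw [projQ_mk] at hy
      obtain ⟨n, hn⟩ := (hfibD g).1 hy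
      have hn' : DoubleCoset.mk (Subgroup.zpowers (c ^ m) ⊔ I) H (c ^ n * g₀)
          = DoubleCoset.mk (Subgroup.zpowers (c ^ m) ⊔ I) H g := by
        have := congrArg (projQ H I (Subgroup.zpowers (c ^ m) ⊔ I) le_sup_right) hn
        rwa [projQ_mk, projQ_mk] at this
      refine ⟨(n : ZMod gd), ?_⟩
      apply Subtype.ext
      show DoubleCoset.mk (Subgroup.zpowers (c ^ m) ⊔ I) H (c ^ (((n : ZMod gd).val : ℤ)) * g₀)
        = DoubleCoset.mk (Subgroup.zpowers (c ^ m) ⊔ I) H g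
      rw [← hn']
      rw [hkey]
      rw [ZMod.val_intCast, Int.emod_def]
      exact ⟨-(n / (gd:ℤ)), by ring⟩
  rw [← Nat.card_eq_of_bijective _ hbij, Nat.card_zmod]


include hcn in
private lemma fiber_le (D : Subgroup G) (hID : I ≤ D)
    (q : DoubleCoset.Quotient (D : Set G) (H : Set G)) :
    Nat.card {x : DoubleCoset.Quotient (I : Set G) (H : Set G) // projQ H I D hID x = q}
      ≤ Fintype.card G := by
  haveI : Finite (DoubleCoset.Quotient (I : Set G) (H : Set G)) := Quotient.finite _
  calc Nat.card {x : DoubleCoset.Quotient (I : Set G) (H : Set G) // projQ H I D hID x = q}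
      ≤ Nat.card (DoubleCoset.Quotient (I : Set G) (H : Set G)) :=
        Nat.card_le_card_of_injective _ Subtype.val_injective
    _ ≤ Nat.card G := Nat.card_le_card_of_surjective (fun g => DoubleCoset.mk I H g)
        (fun x => ⟨Quotient.out x, DoubleCoset.out_eq' I H x⟩)
    _ = Fintype.card G := Nat.card_eq_fintype_card

include hcn in
private lemma sum_gcd_card (D : Subgroup G) (hID : I ≤ D) (hc : c ∈ D)
    (hCI : ∀ d ∈ D, ∃ m : ℤ, ∃ i ∈ I, d = c ^ m * i) (m : ℕ)
    [Fintype (DoubleCoset.Quotient (D : Set G) (H : Set G))] :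
    Nat.card (DoubleCoset.Quotient ((Subgroup.zpowers (c ^ m) ⊔ I : Subgroup G) : Set G) (H : Set G))
      = ∑ q : DoubleCoset.Quotient (D : Set G) (H : Set G),
          Nat.gcd m (Nat.card
            {x : DoubleCoset.Quotient (I : Set G) (H : Set G) // projQ H I D hID x = q}) := by
  have hsup : Subgroup.zpowers (c ^ m) ⊔ I ≤ D :=
    sup_le (Subgroup.zpowers_le.2 (D.pow_mem hc m)) hID
  haveI : Finite (DoubleCoset.Quotient ((Subgroup.zpowers (c ^ m) ⊔ I : Subgroup G) : Set G)
      (H : Set G)) := Quotient.finite _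
  haveI : ∀ q : DoubleCoset.Quotient (D : Set G) (H : Set G),
      Fintype {y : DoubleCoset.Quotient ((Subgroup.zpowers (c ^ m) ⊔ I : Subgroup G) : Set G)
        (H : Set G) // projQ H (Subgroup.zpowers (c ^ m) ⊔ I) D hsup y = q} :=
    fun q => Fintype.ofFinite _
  calc Nat.card (DoubleCoset.Quotient ((Subgroup.zpowers (c ^ m) ⊔ I : Subgroup G) : Set G) (H : Set G))
      = Nat.card (Σ q : DoubleCoset.Quotient (D : Set G) (H : Set G),
          {y : DoubleCoset.Quotient ((Subgroup.zpowers (c ^ m) ⊔ I : Subgroup G) : Set G)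
            (H : Set G) // projQ H (Subgroup.zpowers (c ^ m) ⊔ I) D hsup y = q}) :=
        Nat.card_congr (Equiv.sigmaFiberEquiv _).symm
    _ = ∑ q : DoubleCoset.Quotient (D : Set G) (H : Set G),
          Fintype.card {y : DoubleCoset.Quotient ((Subgroup.zpowers (c ^ m) ⊔ I : Subgroup G) : Set G)
            (H : Set G) // projQ H (Subgroup.zpowers (c ^ m) ⊔ I) D hsup y = q} := by
        rw [Nat.card_eq_fintype_card, Fintype.card_sigma]
    _ = ∑ q : DoubleCoset.Quotient (D : Set G) (H : Set G),
          Nat.gcd m (Nat.card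
            {x : DoubleCoset.Quotient (I : Set G) (H : Set G) // projQ H I D hID x = q}) := by
        refine Finset.sum_congr rfl fun q _ => ?_
        rw [← Nat.card_eq_fintype_card]
        exact (fiber_data I H c hcn D hID hc hCI q).2 m hsup


private lemma inner_set_eq (I H D : Subgroup G) (hID : I ≤ D)
    (q : DoubleCoset.Quotient (D : Set G) (H : Set G)) :
    {x : DoubleCoset.Quotient (I : Set G) (H : Set G) |
        ∃ g : G, x = DoubleCoset.mk I H g ∧ DoubleCoset.mk D H g = q}
      = {x : DoubleCoset.Quotient (I : Set G) (H : Set G) | projQ H I D hID x = q} := by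
  ext x
  simp only [Set.mem_setOf_eq]
  constructor
  · rintro ⟨g, rfl, hg⟩
    rw [projQ_mk]
    exact hg
  · intro hx
    refine ⟨Quotient.out x, (DoubleCoset.out_eq' I H x).symm, ?_⟩
    rw [← hx]
    conv_rhs => rw [← DoubleCoset.out_eq' I H x]
    exact (projQ_mk H I D hID _).symm

private lemma inner_ncard (I H D : Subgroup G) (hID : I ≤ D)
    (q : DoubleCoset.Quotient (D : Set G) (H : Set G)) :
    Set.ncard {x : DoubleCoset.Quotient (I : Set G) (H : Set G) |
        ∃ g : G, x = DoubleCoset.mk I H g ∧ DoubleCoset.mk D H g = q}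
      = Nat.card {x : DoubleCoset.Quotient (I : Set G) (H : Set G) // projQ H I D hID x = q} := by
  rw [inner_set_eq I H D hID q, ← Nat.card_coe_set_eq]
  rfl

end PartB



open Finset in
/-- Let `H₁, H₂` be Gassmann-equivalent subgroups of a finite group `G`, let
`D ≤ G`, `I ◁ D` with `D/I` cyclic, and `C = ⟨c⟩ ≤ D` cyclic with `D = C·I`.
Then for every divisor `d` of `|C|`, `|C^d I\G/H₁| = |C^d I\G/H₂|` (where
`C^d I = ⟨c^d⟩ ⊔ I`), and consequently the multisets of fiber sizes of the
projections `I\G/Hᵢ → D\G/Hᵢ` coincide for `i = 1, 2`. -/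
theorem doset_counts_and_fiber_multisets_of_gassmann
    (G : Type*) [Group G] [Fintype G] (H₁ H₂ D I : Subgroup G) (c : G)
    (hgass : ∀ g : G,
      Set.ncard ({x | IsConj g x} ∩ (H₁ : Set G)) =
        Set.ncard ({x | IsConj g x} ∩ (H₂ : Set G)))
    (hID : I ≤ D)
    (hnormal : ∀ d ∈ D, ∀ i ∈ I, d * i * d⁻¹ ∈ I)
    (hc : c ∈ D)
    (hCI : ∀ d ∈ D, ∃ m : ℤ, ∃ i ∈ I, d = c ^ m * i) :
    (∀ d : ℕ, d ∣ orderOf c →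
      Nat.card (DoubleCoset.Quotient ((Subgroup.zpowers (c ^ d) ⊔ I : Subgroup G) : Set G)
          (H₁ : Set G)) =
        Nat.card (DoubleCoset.Quotient ((Subgroup.zpowers (c ^ d) ⊔ I : Subgroup G) : Set G)
          (H₂ : Set G))) ∧
    (∀ k : ℕ,
      Set.ncard {q : DoubleCoset.Quotient (D : Set G) (H₁ : Set G) |
          Set.ncard {x : DoubleCoset.Quotient (I : Set G) (H₁ : Set G) |
            ∃ g : G, x = DoubleCoset.mk I H₁ g ∧ DoubleCoset.mk D H₁ g = q} = k} =
        Set.ncard {q : DoubleCoset.Quotient (D : Set G) (H₂ : Set G) |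
          Set.ncard {x : DoubleCoset.Quotient (I : Set G) (H₂ : Set G) |
            ∃ g : G, x = DoubleCoset.mk I H₂ g ∧ DoubleCoset.mk D H₂ g = q} = k}) := by
  classical
  have hcn : ∀ n : ℤ, ∀ i ∈ I, c ^ n * i * (c ^ n)⁻¹ ∈ I := fun n i hi =>
    hnormal _ (D.zpow_mem hc n) i hi
  constructor
  · intro d _
    exact gassmann_doset_card (Subgroup.zpowers (c ^ d) ⊔ I) H₁ H₂ hgass
  · intro k
    haveI : Finite (DoubleCoset.Quotient (D : Set G) (H₁ : Set G)) := Quotient.finite _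
    haveI : Finite (DoubleCoset.Quotient (D : Set G) (H₂ : Set G)) := Quotient.finite _
    haveI : Fintype (DoubleCoset.Quotient (D : Set G) (H₁ : Set G)) := Fintype.ofFinite _
    haveI : Fintype (DoubleCoset.Quotient (D : Set G) (H₂ : Set G)) := Fintype.ofFinite _
    set E₁ : DoubleCoset.Quotient (D : Set G) (H₁ : Set G) → ℕ := fun q =>
      Nat.card {x : DoubleCoset.Quotient (I : Set G) (H₁ : Set G) // projQ H₁ I D hID x = q}
      with hE₁
    set E₂ : DoubleCoset.Quotient (D : Set G) (H₂ : Set G) → ℕ := fun q =>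
      Nat.card {x : DoubleCoset.Quotient (I : Set G) (H₂ : Set G) // projQ H₂ I D hID x = q}
      with hE₂
    have hfilter := gcd_sum_determines E₁ E₂ (Fintype.card G)
      (fun q => (fiber_data I H₁ c hcn D hID hc hCI q).1)
      (fun q => (fiber_data I H₂ c hcn D hID hc hCI q).1)
      (fun q => fiber_le I H₁ c hcn D hID q)
      (fun q => fiber_le I H₂ c hcn D hID q)
      (fun m _ => by
        rw [hE₁, hE₂]
        rw [← sum_gcd_card I H₁ c hcn D hID hc hCI m,
          ← sum_gcd_card I H₂ c hcn D hID hc hCI m]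
        exact gassmann_doset_card (Subgroup.zpowers (c ^ m) ⊔ I) H₁ H₂ hgass) k
    have hinner₁ : ∀ q : DoubleCoset.Quotient (D : Set G) (H₁ : Set G),
        Set.ncard {x : DoubleCoset.Quotient (I : Set G) (H₁ : Set G) |
          ∃ g : G, x = DoubleCoset.mk I H₁ g ∧ DoubleCoset.mk D H₁ g = q} = E₁ q :=
      fun q => inner_ncard I H₁ D hID q
    have hinner₂ : ∀ q : DoubleCoset.Quotient (D : Set G) (H₂ : Set G),
        Set.ncard {x : DoubleCoset.Quotient (I : Set G) (H₂ : Set G) |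
          ∃ g : G, x = DoubleCoset.mk I H₂ g ∧ DoubleCoset.mk D H₂ g = q} = E₂ q :=
      fun q => inner_ncard I H₂ D hID q
    simp only [hinner₁, hinner₂]
    have houter₁ : Set.ncard {q : DoubleCoset.Quotient (D : Set G) (H₁ : Set G) | E₁ q = k}
        = (univ.filter fun q => E₁ q = k).card := by
      rw [← Nat.card_coe_set_eq, Nat.card_eq_fintype_card]
      exact Fintype.card_subtype _
    have houter₂ : Set.ncard {q : DoubleCoset.Quotient (D : Set G) (H₂ : Set G) | E₂ q = k}
        = (univ.filter fun q => E₂ q = k).card := by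
      rw [← Nat.card_coe_set_eq, Nat.card_eq_fintype_card]
      exact Fintype.card_subtype _
    rw [houter₁, houter₂]
    exact hfilter
end

section
/- Let G be a finite group, H ≤ G, and K ≤ G any subgroup. Then |K\G/H| = (1/(|K|·|H|)) · Σ over conjugacy classes 𝒞 of G of (|G|/|𝒞|) · |𝒞 ∩ K| · |𝒞 ∩ H|. -/
set_option linter.unusedSectionVars false
section Aux

variable {G : Type*} [Group G] [Fintype G] [DecidableEq G]

lemma aux_nat_card_subtype (p : G → Prop) [DecidablePred p] :
    Nat.card {x : G // p x} = (Finset.univ.filter p).card := by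
  rw [Nat.card_eq_fintype_card, Fintype.card_subtype]

lemma aux_fiber_card (x y : G) (h : IsConj x y) :
    Nat.card {g : G // g * x * g⁻¹ = y} = Nat.card {g : G // g * x * g⁻¹ = x} := by
  obtain ⟨c, hc⟩ := isConj_iff.1 h
  subst hc
  refine Nat.card_congr ⟨fun g => ⟨c⁻¹ * g.1, ?_⟩, fun g => ⟨c * g.1, ?_⟩, ?_, ?_⟩
  · have hg := g.2
    show c⁻¹ * ↑g * x * (c⁻¹ * ↑g)⁻¹ = x
    rw [mul_inv_rev, inv_inv,
      show c⁻¹ * ↑g * x * ((↑g)⁻¹ * c) = c⁻¹ * (↑g * x * (↑g)⁻¹) * c by group, hg]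
    group
  · have hg := g.2
    show c * ↑g * x * (c * ↑g)⁻¹ = c * x * c⁻¹
    rw [mul_inv_rev,
      show c * ↑g * x * ((↑g)⁻¹ * c⁻¹) = c * (↑g * x * (↑g)⁻¹) * c⁻¹ by group, hg]
  · intro g; ext; simp
  · intro g; ext; simp

lemma aux_orbit_stab (x : G) :
    (ConjClasses.mk x).carrier.ncard * Nat.card {g : G // g * x * g⁻¹ = x} = Nat.card G := by
  classical
  have hmap : ∀ g ∈ (Finset.univ : Finset G),
      g * x * g⁻¹ ∈ (ConjClasses.mk x).carrier.toFinset := by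
    intro g _
    simp only [Set.mem_toFinset, ConjClasses.mem_carrier_iff_mk_eq]
    exact (ConjClasses.mk_eq_mk_iff_isConj).2 (isConj_iff.2 ⟨g, rfl⟩).symm
  have key : ∀ y ∈ (ConjClasses.mk x).carrier.toFinset,
      ((Finset.univ : Finset G).filter fun g => g * x * g⁻¹ = y).card =
        Nat.card {g : G // g * x * g⁻¹ = x} := by
    intro y hy
    rw [Set.mem_toFinset, ConjClasses.mem_carrier_iff_mk_eq] at hy
    rw [← aux_nat_card_subtype]
    exact aux_fiber_card x y ((ConjClasses.mk_eq_mk_iff_isConj).1 hy).symm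
  calc (ConjClasses.mk x).carrier.ncard * Nat.card {g : G // g * x * g⁻¹ = x}
      = (ConjClasses.mk x).carrier.toFinset.card * Nat.card {g : G // g * x * g⁻¹ = x} := by
        rw [Set.ncard_eq_toFinset_card']
    _ = ∑ y ∈ (ConjClasses.mk x).carrier.toFinset, Nat.card {g : G // g * x * g⁻¹ = x} := by
        rw [Finset.sum_const, smul_eq_mul]
    _ = ∑ y ∈ (ConjClasses.mk x).carrier.toFinset,
          ((Finset.univ : Finset G).filter fun g => g * x * g⁻¹ = y).card :=
        (Finset.sum_congr rfl key).symm
    _ = (Finset.univ : Finset G).card := (Finset.card_eq_sum_card_fiberwise hmap).symm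
    _ = Nat.card G := by rw [Finset.card_univ, Nat.card_eq_fintype_card]

lemma aux_count (K : Subgroup G) (x : G) :
    Nat.card {g : G // g * x * g⁻¹ ∈ K} =
      ((ConjClasses.mk x).carrier ∩ (K : Set G)).ncard *
        Nat.card {g : G // g * x * g⁻¹ = x} := by
  classical
  have hmap : ∀ g ∈ (Finset.univ.filter fun g : G => g * x * g⁻¹ ∈ K),
      g * x * g⁻¹ ∈ ((ConjClasses.mk x).carrier ∩ (K : Set G)).toFinset := by
    intro g hg
    rw [Finset.mem_filter] at hg
    simp only [Set.mem_toFinset, Set.mem_inter_iff, ConjClasses.mem_carrier_iff_mk_eq]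
    exact ⟨(ConjClasses.mk_eq_mk_iff_isConj).2 (isConj_iff.2 ⟨g, rfl⟩).symm, hg.2⟩
  have key : ∀ y ∈ ((ConjClasses.mk x).carrier ∩ (K : Set G)).toFinset,
      ((Finset.univ.filter fun g : G => g * x * g⁻¹ ∈ K).filter
          fun g => g * x * g⁻¹ = y).card = Nat.card {g : G // g * x * g⁻¹ = x} := by
    intro y hy
    rw [Set.mem_toFinset, Set.mem_inter_iff, ConjClasses.mem_carrier_iff_mk_eq] at hy
    rw [Finset.filter_filter]
    have hcong : ∀ g ∈ (Finset.univ : Finset G),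
        ((g * x * g⁻¹ ∈ K ∧ g * x * g⁻¹ = y) ↔ g * x * g⁻¹ = y) := by
      intro g _
      exact ⟨fun h => h.2, fun h => ⟨h ▸ hy.2, h⟩⟩
    rw [Finset.filter_congr hcong, ← aux_nat_card_subtype]
    exact aux_fiber_card x y ((ConjClasses.mk_eq_mk_iff_isConj).1 hy.1).symm
  calc Nat.card {g : G // g * x * g⁻¹ ∈ K}
      = (Finset.univ.filter fun g : G => g * x * g⁻¹ ∈ K).card := aux_nat_card_subtype _
    _ = ∑ y ∈ ((ConjClasses.mk x).carrier ∩ (K : Set G)).toFinset,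
          ((Finset.univ.filter fun g : G => g * x * g⁻¹ ∈ K).filter
            fun g => g * x * g⁻¹ = y).card := Finset.card_eq_sum_card_fiberwise hmap
    _ = ∑ y ∈ ((ConjClasses.mk x).carrier ∩ (K : Set G)).toFinset,
          Nat.card {g : G // g * x * g⁻¹ = x} := Finset.sum_congr rfl key
    _ = ((ConjClasses.mk x).carrier ∩ (K : Set G)).ncard *
          Nat.card {g : G // g * x * g⁻¹ = x} := by
        rw [Finset.sum_const, smul_eq_mul, Set.ncard_eq_toFinset_card']

lemma aux_countQ (K : Subgroup G) (x : G) :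
    (Nat.card {g : G // g * x * g⁻¹ ∈ K} : ℚ) =
      ((Nat.card G : ℚ) / ((ConjClasses.mk x).carrier.ncard : ℚ)) *
        (((ConjClasses.mk x).carrier ∩ (K : Set G)).ncard : ℚ) := by
  have hne : ((ConjClasses.mk x).carrier.ncard : ℚ) ≠ 0 := by
    have : 0 < (ConjClasses.mk x).carrier.ncard := by
      rw [Set.ncard_pos (Set.toFinite _)]
      exact ⟨x, ConjClasses.mem_carrier_iff_mk_eq.2 rfl⟩
    exact_mod_cast this.ne'
  have h1 := aux_orbit_stab x
  have h2 := aux_count K x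
  have key : Nat.card {g : G // g * x * g⁻¹ ∈ K} * (ConjClasses.mk x).carrier.ncard =
      Nat.card G * ((ConjClasses.mk x).carrier ∩ (K : Set G)).ncard := by
    rw [h2, ← h1]; ring
  rw [div_mul_eq_mul_div, eq_div_iff hne]
  exact_mod_cast key

end Aux

open DoubleCoset Finset

section Main

variable {G : Type*} [Group G] [Fintype G] [DecidableEq G] (H K : Subgroup G)
  [Fintype H] [Fintype K]

def dosetAction_s12 : MulAction (↥K × ↥H) G where
  smul p g := p.1 * g * (p.2 : G)⁻¹
  one_smul g := by show (1 : G) * g * ((1 : H) : G)⁻¹ = g; simp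
  mul_smul p q g := by
    show ((p.1 * q.1 : K) : G) * g * ((p.2 * q.2 : H) : G)⁻¹ =
      (p.1 : G) * ((q.1 : G) * g * (q.2 : G)⁻¹) * (p.2 : G)⁻¹
    push_cast
    group

lemma claim1 :
    Nat.card (DoubleCoset.Quotient (K : Set G) (H : Set G)) * (Nat.card K * Nat.card H) =
      ∑ h : H, Nat.card {g : G // g * (h : G) * g⁻¹ ∈ K} := by
  classical
  letI := dosetAction_s12 H K
  haveI : ∀ p : ↥K × ↥H, Fintype (MulAction.fixedBy G p) := fun p => Fintype.ofFinite _
  haveI : Finite (MulAction.orbitRel.Quotient (↥K × ↥H) G) := Quotient.finite _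
  haveI : Fintype (MulAction.orbitRel.Quotient (↥K × ↥H) G) := Fintype.ofFinite _
  have burnside := MulAction.sum_card_fixedBy_eq_card_orbits_mul_card_group (↥K × ↥H) G
  have equiv : MulAction.orbitRel.Quotient (↥K × ↥H) G ≃
      DoubleCoset.Quotient (K : Set G) (H : Set G) := by
    apply Quotient.congrRight
    intro a b
    rw [MulAction.orbitRel_apply, MulAction.mem_orbit_iff, DoubleCoset.rel_iff]
    constructor
    · rintro ⟨⟨k, h⟩, hp⟩
      refine ⟨(k : G)⁻¹, K.inv_mem k.2, (h : G), h.2, ?_⟩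
      have hp' : (k : G) * b * (h : G)⁻¹ = a := hp
      rw [← hp']; group
    · rintro ⟨k, hk, h, hh, rfl⟩
      exact ⟨⟨⟨k⁻¹, K.inv_mem hk⟩, ⟨h, hh⟩⟩,
        by show k⁻¹ * (k * a * h) * h⁻¹ = a; group⟩
  have hfix : ∀ p : ↥K × ↥H, Fintype.card (MulAction.fixedBy G p) =
      Nat.card {g : G // (p.1 : G) * g * (p.2 : G)⁻¹ = g} := by
    intro p
    rw [← Nat.card_eq_fintype_card]
    rfl
  rw [Fintype.sum_congr _ _ hfix] at burnside
  rw [← Nat.card_eq_fintype_card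
      (α := MulAction.orbitRel.Quotient (↥K × ↥H) G)] at burnside
  rw [Nat.card_congr equiv] at burnside
  rw [← Nat.card_eq_fintype_card (α := ↥K × ↥H), Nat.card_prod] at burnside
  rw [← burnside]
  rw [Fintype.sum_prod_type]
  rw [Finset.sum_comm]
  refine Finset.sum_congr rfl fun h _ => ?_
  have step : ∀ k : K, Nat.card {g : G // (k : G) * g * (h : G)⁻¹ = g} =
      (Finset.univ.filter fun g : G => (k : G) = g * (h : G) * g⁻¹).card := by
    intro k
    rw [aux_nat_card_subtype]
    congr 1
    apply Finset.filter_congr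
    intro g _
    constructor
    · intro hg
      rw [mul_inv_eq_iff_eq_mul] at hg
      rw [eq_mul_inv_iff_mul_eq]
      exact hg
    · intro hg
      rw [hg]; group
  simp_rw [step]
  rw [aux_nat_card_subtype]
  simp_rw [Finset.card_filter]
  rw [Finset.sum_comm]
  refine Finset.sum_congr rfl fun g _ => ?_
  by_cases hK : g * (h : G) * g⁻¹ ∈ K
  · rw [if_pos hK, Finset.sum_eq_single (⟨g * (h : G) * g⁻¹, hK⟩ : K)]
    · simp
    · intro k _ hk
      rw [if_neg]
      intro hc
      exact hk (Subtype.ext hc)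
    · intro habs; exact absurd (Finset.mem_univ _) habs
  · rw [if_neg hK, Finset.sum_eq_zero]
    intro k _
    rw [if_neg]
    intro hc
    exact hK (hc ▸ k.2)

lemma claim2 :
    (∑ h : H, (Nat.card {g : G // g * (h : G) * g⁻¹ ∈ K} : ℚ)) =
      ∑ 𝒞 : ConjClasses G,
        ((Nat.card G : ℚ) / (𝒞.carrier.ncard : ℚ)) *
          (Set.ncard (𝒞.carrier ∩ (K : Set G)) : ℚ) *
          (Set.ncard (𝒞.carrier ∩ (H : Set G)) : ℚ) := by
  classical
  rw [← Finset.sum_fiberwise Finset.univ (fun h : H => ConjClasses.mk (h : G))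
    (fun h : H => (Nat.card {g : G // g * (h : G) * g⁻¹ ∈ K} : ℚ))]
  refine Finset.sum_congr rfl fun 𝒞 _ => ?_
  have hterm : ∀ h ∈ Finset.univ.filter fun h : H => ConjClasses.mk (h : G) = 𝒞,
      (Nat.card {g : G // g * (h : G) * g⁻¹ ∈ K} : ℚ) =
        ((Nat.card G : ℚ) / (𝒞.carrier.ncard : ℚ)) *
          (Set.ncard (𝒞.carrier ∩ (K : Set G)) : ℚ) := by
    intro h hh
    rw [Finset.mem_filter] at hh
    rw [aux_countQ, hh.2]
  rw [Finset.sum_congr rfl hterm, Finset.sum_const, nsmul_eq_mul]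
  have hcard : (Finset.univ.filter fun h : H => ConjClasses.mk (h : G) = 𝒞).card =
      (𝒞.carrier ∩ (H : Set G)).ncard := by
    rw [Set.ncard_eq_toFinset_card']
    apply Finset.card_bij (fun (h : H) _ => (h : G))
    · intro h hh
      rw [Finset.mem_filter] at hh
      simp only [Set.mem_toFinset, Set.mem_inter_iff, ConjClasses.mem_carrier_iff_mk_eq]
      exact ⟨hh.2, h.2⟩
    · intro a _ b _ hab
      exact Subtype.ext hab
    · intro y hy
      simp only [Set.mem_toFinset, Set.mem_inter_iff, ConjClasses.mem_carrier_iff_mk_eq] at hy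
      exact ⟨⟨y, hy.2⟩, by simp [hy.1], rfl⟩
  rw [hcard]
  ring

end Main

open DoubleCoset

/-- For subgroups `H, K` of a finite group `G`, the number of double cosets is
`|K\G/H| = (1/(|K||H|)) · ∑_{𝒞} (|G|/|𝒞|) · |𝒞 ∩ K| · |𝒞 ∩ H|`, the sum ranging
over the conjugacy classes `𝒞` of `G`. -/
theorem card_dosets_eq_sum_over_conj_classes
    (G : Type*) [Group G] [Fintype G] [DecidableEq G] (H K : Subgroup G) :
    (Nat.card (DoubleCoset.Quotient (K : Set G) (H : Set G)) : ℚ) =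
      (1 / ((Nat.card K : ℚ) * (Nat.card H : ℚ))) *
        ∑ 𝒞 : ConjClasses G,
          ((Nat.card G : ℚ) / (𝒞.carrier.ncard : ℚ)) *
            (Set.ncard (𝒞.carrier ∩ (K : Set G)) : ℚ) *
            (Set.ncard (𝒞.carrier ∩ (H : Set G)) : ℚ) := by
  haveI : Fintype ↥H := Fintype.ofFinite _
  haveI : Fintype ↥K := Fintype.ofFinite _
  have h1 := claim1 H K
  have h2 := claim2 H K
  have hK : (Nat.card K : ℚ) ≠ 0 := by
    have : 0 < Nat.card K := Nat.card_pos
    exact_mod_cast this.ne'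
  have hH : (Nat.card H : ℚ) ≠ 0 := by
    have : 0 < Nat.card H := Nat.card_pos
    exact_mod_cast this.ne'
  rw [← h2]
  have h1Q : (Nat.card (DoubleCoset.Quotient (K : Set G) (H : Set G)) : ℚ) *
      ((Nat.card K : ℚ) * (Nat.card H : ℚ)) =
      ∑ h : H, (Nat.card {g : G // g * (h : G) * g⁻¹ ∈ K} : ℚ) := by
    exact_mod_cast congrArg (Nat.cast (R := ℚ)) h1
  rw [one_div, eq_comm, inv_mul_eq_iff_eq_mul₀ (mul_ne_zero hK hH), eq_comm, mul_comm]
  exact h1Q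
end
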